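/- arXiv:2206.07995 — 2 statements merged into one kernel-verified Lean document; each statement's English description precedes it below -/
import Mathlib

section
/- Let n ≥ 1 and 1 ≤ α ≤ n be integers, and let x ∈ Z_2^n be an α-balanced sequence. Then |L_1(x)| = (n+1−α)(n−1) + 2 − (k/2)(⌈n/α⌉−1)(⌈n/α⌉−2) − ((α−k)/2)(⌈n/α⌉−2)(⌈n/α⌉−3), where k is the unique integer with 1 ≤ k ≤ α and k ≡ n (mod α). -/
open scoped Classical

/-- Length of a longest common subsequence of two lists. -/
noncomputable def lcsLen {α : Type*} (x y : List α) : ℕ :=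
  sSup {k | ∃ z : List α, z.Sublist x ∧ z.Sublist y ∧ z.length = k}

/-- The fixed-length Levenshtein (FLL) distance on `Fin n → Fin q`:
`d_ℓ(x,y) = n - LCS(x,y)`. -/
noncomputable def fllDist {q n : ℕ} (x y : Fin n → Fin q) : ℕ :=
  n - lcsLen (List.ofFn x) (List.ofFn y)

/-- The FLL `t`-ball centered at `x`. -/
noncomputable def fllBall (q n t : ℕ) (x : Fin n → Fin q) : Finset (Fin n → Fin q) :=
  Finset.univ.filter fun y => fllDist x y ≤ t

/-- The Hamming `t`-ball centered at `x`. -/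
noncomputable def hammingBall (q n t : ℕ) (x : Fin n → Fin q) : Finset (Fin n → Fin q) :=
  Finset.univ.filter fun y => hammingDist x y ≤ t

/-- The number of runs (maximal blocks of consecutive equal symbols) of a list. -/
def numRuns {α : Type*} [DecidableEq α] : List α → ℕ
  | [] => 0
  | [_] => 1
  | a :: b :: l => (if a = b then 0 else 1) + numRuns (b :: l)

/-- A list is alternating (of shape `σ σ' σ σ' ⋯` with `σ ≠ σ'`): adjacent entries
differ and entries two apart agree. -/
def IsAltList {α : Type*} (l : List α) : Prop :=
  (∀ i, ∀ h : i + 1 < l.length, l.get ⟨i, by omega⟩ ≠ l.get ⟨i + 1, h⟩) ∧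
  (∀ i, ∀ h : i + 2 < l.length, l.get ⟨i, by omega⟩ = l.get ⟨i + 2, h⟩)

/-- The contiguous block `l_i ⋯ l_j` of a list (0-indexed, inclusive). -/
def blockSeg {α : Type*} (l : List α) (i j : ℕ) : List α := (l.drop i).take (j + 1 - i)

/-- `(i, j)` indexes a maximal alternating segment of `l`. -/
def IsMaxAltSeg {α : Type*} (l : List α) (i j : ℕ) : Prop :=
  i ≤ j ∧ j < l.length ∧ IsAltList (blockSeg l i j) ∧
    (i = 0 ∨ ¬ IsAltList (blockSeg l (i - 1) j)) ∧
    (j = l.length - 1 ∨ ¬ IsAltList (blockSeg l i (j + 1)))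

/-- The index pairs of the maximal alternating segments of `l`. -/
noncomputable def maxAltSegs {α : Type*} (l : List α) : Finset (ℕ × ℕ) :=
  (Finset.range l.length ×ˢ Finset.range l.length).filter fun p => IsMaxAltSeg l p.1 p.2

/-- `A(x)`: the number of maximal alternating segments. -/
noncomputable def numAltSegs {α : Type*} (l : List α) : ℕ := (maxAltSegs l).card

/-- The sum `Σ s_i` of the lengths of the maximal alternating segments. -/
noncomputable def segLenSum {α : Type*} (l : List α) : ℕ :=
  ∑ p ∈ maxAltSegs l, (p.2 + 1 - p.1)

/-- The sum `Σ s_i²` of the squared lengths of the maximal alternating segments. -/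
noncomputable def segLenSqSum {α : Type*} (l : List α) : ℕ :=
  ∑ p ∈ maxAltSegs l, (p.2 + 1 - p.1) ^ 2

/-- `x ∈ Z_2^n` is `a`-balanced: it has `a` maximal alternating segments, each of
length `⌈n/a⌉` or `⌈n/a⌉ - 1`. -/
def IsBalanced (n a : ℕ) (x : Fin n → Fin 2) : Prop :=
  numAltSegs (List.ofFn x) = a ∧
    ∀ p ∈ maxAltSegs (List.ofFn x),
      p.2 + 1 - p.1 = (n + a - 1) / a ∨ p.2 + 1 - p.1 = (n + a - 1) / a - 1

/-- The number of zero entries of the difference vector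
`x' = (x₂ - x₁, …, x_n - x_{n-1})` (differences mod `q`). -/
def zerosDiff {q n : ℕ} (x : Fin n → Fin q) : ℕ :=
  (List.zipWith (fun a b => a - b) (List.ofFn x).tail (List.ofFn x)).countP fun v => v.val == 0

/-- Hamming weight of a binary word. -/
def wt {n : ℕ} (a : Fin n → Fin 2) : ℕ := (Finset.univ.filter fun i => a i ≠ 0).card

/-- An anticode of diameter one in `Z_2^n` under the FLL metric. -/
def IsAnticode1 (n : ℕ) (A : Finset (Fin n → Fin 2)) : Prop :=
  ∀ a ∈ A, ∀ b ∈ A, fllDist a b ≤ 1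

/-- A maximal anticode of diameter one. -/
def IsMaximalAnticode1 (n : ℕ) (A : Finset (Fin n → Fin 2)) : Prop :=
  IsAnticode1 n A ∧ ∀ B : Finset (Fin n → Fin 2), IsAnticode1 n B → A ⊆ B → A = B

/-- `χ(s)`: the total number, over all `x ∈ Z_q^n`, of maximal alternating
segments of `x` of length `s`. -/
noncomputable def chi (q n s : ℕ) : ℕ :=
  ∑ x : Fin n → Fin q, ((maxAltSegs (List.ofFn x)).filter fun p => p.2 + 1 - p.1 = s).card

namespace FLLwork
set_option maxHeartbeats 2000000

lemma fin2_eq_add_one {a b : Fin 2} (h : a ≠ b) : a = b + 1 := by revert a b; decide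

lemma fin2_trans {a b c : Fin 2} (h1 : a ≠ b) (h2 : b ≠ c) : a = c := by revert a b c; decide

variable {n : ℕ}

def extF (x : Fin n → Fin 2) : ℕ → Fin 2 := fun t => if h : t < n then x ⟨t, h⟩ else 0

lemma extF_eq (x : Fin n → Fin 2) {t : ℕ} (h : t < n) : extF x t = x ⟨t, h⟩ := dif_pos h

lemma extF_inj {x y : Fin n → Fin 2} (h : ∀ t < n, extF x t = extF y t) : x = y := by
  funext t
  have := h t t.isLt
  rwa [extF_eq x t.isLt, extF_eq y t.isLt] at this

lemma getElem_ofFn' (x : Fin n → Fin 2) {s : ℕ} {L : List (Fin 2)} (hL : L = List.ofFn x)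
    (hh : s < L.length) : L[s] = extF x s := by
  subst hL
  rw [List.getElem_ofFn, extF_eq x (by simpa using hh)]

/-- `y` is obtained from `x` by a left shift on window `[i,j]` (`y j` free). -/
def LS (x y : Fin n → Fin 2) (i j : ℕ) : Prop :=
  i ≤ j ∧ j < n ∧ ∀ t, t < n →
    (t < i → extF y t = extF x t) ∧
    (i ≤ t → t < j → extF y t = extF x (t + 1)) ∧
    (j < t → extF y t = extF x t)

lemma lcs_nonempty (X Y : List (Fin 2)) :
    {k | ∃ z : List (Fin 2), z.Sublist X ∧ z.Sublist Y ∧ z.length = k}.Nonempty :=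
  ⟨0, [], List.nil_sublist _, List.nil_sublist _, rfl⟩

lemma lcs_bdd (X Y : List (Fin 2)) :
    BddAbove {k | ∃ z : List (Fin 2), z.Sublist X ∧ z.Sublist Y ∧ z.length = k} :=
  ⟨X.length, fun _ ⟨_, hzx, _, hl⟩ => hl ▸ hzx.length_le⟩

lemma fllDist_le_one_iff (x y : Fin n → Fin 2) :
    fllDist x y ≤ 1 ↔ ∃ z : List (Fin 2),
      z.Sublist (List.ofFn x) ∧ z.Sublist (List.ofFn y) ∧ n ≤ z.length + 1 := by
  unfold fllDist lcsLen
  constructor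
  · intro h
    have hmem := Nat.sSup_mem (lcs_nonempty (List.ofFn x) (List.ofFn y))
      (lcs_bdd (List.ofFn x) (List.ofFn y))
    obtain ⟨z, hzx, hzy, hzl⟩ := hmem
    exact ⟨z, hzx, hzy, by omega⟩
  · rintro ⟨z, hzx, hzy, hzl⟩
    have : z.length ≤ sSup {k | ∃ z : List (Fin 2),
        z.Sublist (List.ofFn x) ∧ z.Sublist (List.ofFn y) ∧ z.length = k} :=
      le_csSup (lcs_bdd _ _) ⟨z, hzx, hzy, rfl⟩
    omega

lemma sublist_eraseIdx {z l : List (Fin 2)} (h : z.Sublist l) (hl : z.length + 1 = l.length) :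
    ∃ i, i < l.length ∧ l.eraseIdx i = z := by
  induction h with
  | slnil => simp at hl
  | @cons l₁ l₂ a h ih =>
      have hz : l₁ = l₂ := h.eq_of_length (by simp at hl; omega)
      exact ⟨0, by simp, by simpa using hz.symm⟩
  | @cons_cons l₁ l₂ a h ih =>
      obtain ⟨i, hi, he⟩ := ih (by simp at hl ⊢; omega)
      exact ⟨i + 1, by simp; omega, by rw [List.eraseIdx_cons_succ, he]⟩

lemma LS_of_erase {x y : Fin n → Fin 2} {p q : ℕ} (hp : p ≤ q) (hq : q < n)
    (E : (List.ofFn x).eraseIdx p = (List.ofFn y).eraseIdx q) : LS x y p q := by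
  have hlx : ((List.ofFn x).eraseIdx p).length = n - 1 := by
    rw [List.length_eraseIdx]; simp [Nat.lt_of_le_of_lt hp hq]
  have hly : ((List.ofFn y).eraseIdx q).length = n - 1 := by
    rw [List.length_eraseIdx]; simp [hq]
  refine ⟨hp, hq, fun t ht => ⟨fun h1 => ?_, fun h1 h2 => ?_, fun h1 => ?_⟩⟩
  · -- t < p ≤ q : y t = x t
    have EE : ((List.ofFn x).eraseIdx p)[t]'(by omega) =
        ((List.ofFn y).eraseIdx q)[t]'(by omega) := by simp only [E]
    rw [List.getElem_eraseIdx_of_lt (l := List.ofFn x) (i := p) (j := t) (by omega) (by omega),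
        List.getElem_eraseIdx_of_lt (l := List.ofFn y) (i := q) (j := t) (by omega) (by omega),
        getElem_ofFn' x rfl, getElem_ofFn' y rfl] at EE
    exact EE.symm
  · -- p ≤ t < q : y t = x (t+1)
    have EE : ((List.ofFn x).eraseIdx p)[t]'(by omega) =
        ((List.ofFn y).eraseIdx q)[t]'(by omega) := by simp only [E]
    rw [List.getElem_eraseIdx_of_ge (l := List.ofFn x) (i := p) (j := t) (by omega) (by omega),
        List.getElem_eraseIdx_of_lt (l := List.ofFn y) (i := q) (j := t) (by omega) (by omega),
        getElem_ofFn' x rfl, getElem_ofFn' y rfl] at EE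
    exact EE.symm
  · -- q < t : y t = x t
    have EE : ((List.ofFn x).eraseIdx p)[t-1]'(by omega) =
        ((List.ofFn y).eraseIdx q)[t-1]'(by omega) := by simp only [E]
    rw [List.getElem_eraseIdx_of_ge (l := List.ofFn x) (i := p) (j := (t-1)) (by omega) (by omega),
        List.getElem_eraseIdx_of_ge (l := List.ofFn y) (i := q) (j := (t-1)) (by omega) (by omega),
        getElem_ofFn' x rfl, getElem_ofFn' y rfl] at EE
    have ht1 : t - 1 + 1 = t := by omega
    rw [ht1] at EE
    exact EE.symm

lemma erase_of_LS {x y : Fin n → Fin 2} {i j : ℕ} (h : LS x y i j) :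
    (List.ofFn x).eraseIdx i = (List.ofFn y).eraseIdx j := by
  obtain ⟨hij, hj, hw⟩ := h
  have hi : i < n := lt_of_le_of_lt hij hj
  have hlx : ((List.ofFn x).eraseIdx i).length = n - 1 := by
    rw [List.length_eraseIdx]; simp [hi]
  have hly : ((List.ofFn y).eraseIdx j).length = n - 1 := by
    rw [List.length_eraseIdx]; simp [hj]
  apply List.ext_getElem (by omega)
  intro s h1 h2
  have hs : s < n - 1 := by omega
  rcases Nat.lt_or_ge s i with c1 | c1
  · -- s < i ≤ j
    rw [List.getElem_eraseIdx_of_lt (l := List.ofFn x) (i := i) (j := s) (by omega) (by omega),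
        List.getElem_eraseIdx_of_lt (l := List.ofFn y) (i := j) (j := s) (by omega) (by omega),
        getElem_ofFn' x rfl, getElem_ofFn' y rfl]
    exact ((hw s (by omega)).1 (by omega)).symm
  · rcases Nat.lt_or_ge s j with c2 | c2
    · -- i ≤ s < j
      rw [List.getElem_eraseIdx_of_ge (l := List.ofFn x) (i := i) (j := s) (by omega) (by omega),
          List.getElem_eraseIdx_of_lt (l := List.ofFn y) (i := j) (j := s) (by omega) (by omega),
          getElem_ofFn' x rfl, getElem_ofFn' y rfl]
      exact ((hw s (by omega)).2.1 (by omega) (by omega)).symm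
    · -- j ≤ s
      rw [List.getElem_eraseIdx_of_ge (l := List.ofFn x) (i := i) (j := s) (by omega) (by omega),
          List.getElem_eraseIdx_of_ge (l := List.ofFn y) (i := j) (j := s) (by omega) (by omega),
          getElem_ofFn' x rfl, getElem_ofFn' y rfl]
      exact ((hw (s + 1) (by omega)).2.2 (by omega)).symm

lemma mem_ball_iff (hn : 1 ≤ n) (x y : Fin n → Fin 2) :
    fllDist x y ≤ 1 ↔ ∃ i j, LS x y i j ∨ LS y x i j := by
  rw [fllDist_le_one_iff]
  constructor
  · rintro ⟨z, hzx, hzy, hzl⟩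
    have hxl : (List.ofFn x).length = n := by simp
    have hyl : (List.ofFn y).length = n := by simp
    have hub := hzx.length_le
    rcases Nat.lt_or_ge z.length n with hlt | hge
    · obtain ⟨p, hp, hep⟩ := sublist_eraseIdx hzx (by omega)
      obtain ⟨q, hq, heq⟩ := sublist_eraseIdx hzy (by omega)
      rw [hxl] at hp; rw [hyl] at hq
      rcases le_or_gt p q with hpq | hqp
      · exact ⟨p, q, Or.inl (LS_of_erase hpq hq (by rw [hep, heq]))⟩
      · exact ⟨q, p, Or.inr (LS_of_erase (le_of_lt hqp) hp (by rw [heq, hep]))⟩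
    · have hzx' : z = List.ofFn x := hzx.eq_of_length (by omega)
      have hzy' : z = List.ofFn y := hzy.eq_of_length (by omega)
      have hxy : x = y := List.ofFn_inj.mp (hzx' ▸ hzy')
      subst hxy
      exact ⟨0, 0, Or.inl ⟨le_refl 0, hn, fun t ht => ⟨by omega, by omega, fun _ => rfl⟩⟩⟩
  · rintro ⟨i, j, h | h⟩
    · refine ⟨(List.ofFn x).eraseIdx i, List.eraseIdx_sublist _ i, ?_, ?_⟩
      · rw [erase_of_LS h]; exact List.eraseIdx_sublist _ j
      · rw [List.length_eraseIdx]
        have : i < n := lt_of_le_of_lt h.1 h.2.1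
        simp [this]; omega
    · refine ⟨(List.ofFn y).eraseIdx i, ?_, List.eraseIdx_sublist _ i, ?_⟩
      · rw [erase_of_LS h]; exact List.eraseIdx_sublist _ j
      · rw [List.length_eraseIdx]
        have : i < n := lt_of_le_of_lt h.1 h.2.1
        simp [this]; omega


section CanonicalForms

variable {x : Fin n → Fin 2}

def flipF (x : Fin n → Fin 2) (i : ℕ) : Fin n → Fin 2 :=
  fun t => if (t : ℕ) = i then x t + 1 else x t

def yL (x : Fin n → Fin 2) (i j : ℕ) : Fin n → Fin 2 := fun t =>
  if (t : ℕ) < i then x t else if (t : ℕ) = j then x t + 1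
  else if j < (t : ℕ) then x t else extF x ((t : ℕ) + 1)

def yR (x : Fin n → Fin 2) (i j : ℕ) : Fin n → Fin 2 := fun t =>
  if (t : ℕ) = i then x t + 1 else if (t : ℕ) < i then x t
  else if j < (t : ℕ) then x t else extF x ((t : ℕ) - 1)

lemma extF_flipF_eq {i t : ℕ} (ht : t < n) (h : t = i) :
    extF (flipF x i) t = extF x t + 1 := by
  rw [extF_eq _ ht, extF_eq x ht, flipF]; simp [h]

lemma extF_flipF_ne {i t : ℕ} (ht : t < n) (h : t ≠ i) :
    extF (flipF x i) t = extF x t := by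
  rw [extF_eq _ ht, extF_eq x ht, flipF]; simp [h]

lemma yL_lt {i j t : ℕ} (ht : t < n) (h : t < i) : extF (yL x i j) t = extF x t := by
  rw [extF_eq _ ht, extF_eq x ht, yL]; simp [h]

lemma yL_at {i j : ℕ} (hij : i ≤ j) (hj : j < n) :
    extF (yL x i j) j = extF x j + 1 := by
  rw [extF_eq _ hj, extF_eq x hj, yL]
  simp [Nat.not_lt.mpr hij]

lemma yL_gt {i j t : ℕ} (ht : t < n) (hij : i ≤ j) (h : j < t) : extF (yL x i j) t = extF x t := by
  rw [extF_eq _ ht, extF_eq x ht, yL]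
  have h1 : ¬ ((t : ℕ) < i) := by omega
  have h2 : (t : ℕ) ≠ j := by omega
  simp [h1, h2, h]

lemma yL_mid {i j t : ℕ} (ht : t < n) (h1 : i ≤ t) (h2 : t < j) :
    extF (yL x i j) t = extF x (t + 1) := by
  rw [extF_eq _ ht, yL]
  have c1 : ¬ ((t : ℕ) < i) := by omega
  have c2 : (t : ℕ) ≠ j := by omega
  have c3 : ¬ (j < (t : ℕ)) := by omega
  simp [c1, c2, c3]

lemma yR_at {i j : ℕ} (hi : i < n) : extF (yR x i j) i = extF x i + 1 := by
  rw [extF_eq _ hi, extF_eq x hi, yR]; simp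

lemma yR_lt {i j t : ℕ} (ht : t < n) (h : t < i) : extF (yR x i j) t = extF x t := by
  rw [extF_eq _ ht, extF_eq x ht, yR]
  have : (t : ℕ) ≠ i := by omega
  simp [this, h]

lemma yR_gt {i j t : ℕ} (ht : t < n) (hij : i ≤ j) (h : j < t) :
    extF (yR x i j) t = extF x t := by
  rw [extF_eq _ ht, extF_eq x ht, yR]
  have h1 : (t : ℕ) ≠ i := by omega
  have h2 : ¬ ((t : ℕ) < i) := by omega
  simp [h1, h2, h]

lemma yR_mid {i j t : ℕ} (ht : t < n) (h1 : i < t) (h2 : t ≤ j) :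
    extF (yR x i j) t = extF x (t - 1) := by
  rw [extF_eq _ ht, yR]
  have c1 : (t : ℕ) ≠ i := by omega
  have c2 : ¬ ((t : ℕ) < i) := by omega
  have c3 : ¬ (j < (t : ℕ)) := by omega
  simp [c1, c2, c3]

/-- conditions for membership in the canonical left / right families -/
def PLcond (x : Fin n → Fin 2) (i j : ℕ) : Prop :=
  i < j ∧ j < n ∧ extF x i ≠ extF x (i + 1)

def PRcond (x : Fin n → Fin 2) (i j : ℕ) : Prop :=
  i < j ∧ j < n ∧ extF x (j - 1) ≠ extF x j ∧
    ∃ t, i ≤ t ∧ t < j ∧ extF x t = extF x (t + 1)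

lemma LS_self (hn : 1 ≤ n) (x : Fin n → Fin 2) : LS x x 0 0 :=
  ⟨le_refl 0, hn, fun t _ => ⟨by omega, by omega, fun _ => rfl⟩⟩

lemma LS_flip {i : ℕ} (hi : i < n) : LS x (flipF x i) i i :=
  ⟨le_refl i, hi, fun t ht => ⟨fun h => extF_flipF_ne ht (by omega),
    fun h1 h2 => by omega, fun h => extF_flipF_ne ht (by omega)⟩⟩

lemma LS_yL {i j : ℕ} (h : PLcond x i j) : LS x (yL x i j) i j :=
  ⟨le_of_lt h.1, h.2.1, fun t ht => ⟨fun hc => yL_lt ht hc,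
    fun h1 h2 => yL_mid ht h1 h2, fun hc => yL_gt ht (le_of_lt h.1) hc⟩⟩

lemma LS_yR {i j : ℕ} (h : PRcond x i j) : LS (yR x i j) x i j := by
  obtain ⟨hij, hjn, -, -⟩ := h
  refine ⟨le_of_lt hij, hjn, fun t ht => ⟨fun hc => (yR_lt ht hc).symm,
    fun h1 h2 => ?_, fun hc => (yR_gt ht (le_of_lt hij) hc).symm⟩⟩
  rw [yR_mid (show t + 1 < n by omega) (by omega) (by omega)]
  norm_num

end CanonicalForms


section Canonicalize

variable {x y : Fin n → Fin 2}

noncomputable def diffs (x y : Fin n → Fin 2) : Finset ℕ :=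
  (Finset.range n).filter fun t => extF y t ≠ extF x t

lemma diffs_nonempty (h : y ≠ x) : (diffs x y).Nonempty := by
  by_contra hc
  rw [Finset.not_nonempty_iff_eq_empty] at hc
  apply h
  apply extF_inj
  intro t ht
  by_contra hne
  have : t ∈ diffs x y := by
    rw [diffs, Finset.mem_filter, Finset.mem_range]
    exact ⟨ht, fun he => hne he⟩
  rw [hc] at this
  simp at this

lemma mem_diffs {t : ℕ} : t ∈ diffs x y ↔ t < n ∧ extF y t ≠ extF x t := by
  rw [diffs, Finset.mem_filter, Finset.mem_range]

/-- canonicalization of a left-shift relation -/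
lemma canonL {i j : ℕ} (h : LS x y i j) :
    y = x ∨ (∃ i0 < n, y = flipF x i0) ∨ (∃ i0 j0, PLcond x i0 j0 ∧ y = yL x i0 j0) := by
  by_cases hyx : y = x
  · exact Or.inl hyx
  obtain ⟨hij, hjn, hw⟩ := h
  have hne := diffs_nonempty hyx
  set i0 := (diffs x y).min' hne with hi0def
  set j0 := (diffs x y).max' hne with hj0def
  have hi0 : i0 ∈ diffs x y := Finset.min'_mem _ hne
  have hj0 : j0 ∈ diffs x y := Finset.max'_mem _ hne
  rw [mem_diffs] at hi0 hj0
  have hbnd : ∀ t ∈ diffs x y, i ≤ t ∧ t ≤ j := by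
    intro t htm
    rw [mem_diffs] at htm
    constructor
    · by_contra hc
      exact htm.2 ((hw t htm.1).1 (by omega))
    · by_contra hc
      exact htm.2 ((hw t htm.1).2.2 (by omega))
  have hii0 : i ≤ i0 := (hbnd i0 (Finset.min'_mem _ hne)).1
  have hjj0 : j0 ≤ j := (hbnd j0 (Finset.max'_mem _ hne)).2
  have hi0j0 : i0 ≤ j0 := Finset.min'_le _ _ (Finset.max'_mem _ hne)
  have hlow : ∀ t < i0, t < n → extF y t = extF x t := by
    intro t ht htn
    by_contra hc
    exact absurd (Finset.min'_le _ t (mem_diffs.mpr ⟨htn, hc⟩)) (by omega)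
  have hhigh : ∀ t, j0 < t → t < n → extF y t = extF x t := by
    intro t ht htn
    by_contra hc
    exact absurd (Finset.le_max' _ t (mem_diffs.mpr ⟨htn, hc⟩)) (by omega)
  rcases eq_or_lt_of_le hi0j0 with heq | hlt
  · -- y = flipF x i0
    refine Or.inr (Or.inl ⟨i0, hi0.1, extF_inj fun t htn => ?_⟩)
    rcases eq_or_ne t i0 with rfl | hti
    · rw [extF_flipF_eq htn rfl]
      exact fin2_eq_add_one hi0.2
    · rw [extF_flipF_ne htn hti]
      rcases Nat.lt_or_ge t i0 with hc | hc
      · exact hlow t hc htn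
      · exact hhigh t (by omega) htn
  · -- y = yL x i0 j0
    have hmid : ∀ t, i0 ≤ t → t < j0 → extF y t = extF x (t + 1) := by
      intro t h1 h2
      exact (hw t (by omega)).2.1 (by omega) (by omega)
    have hvalid : extF x i0 ≠ extF x (i0 + 1) := by
      intro he
      exact hi0.2 (by rw [hmid i0 le_rfl hlt, ← he])
    refine Or.inr (Or.inr ⟨i0, j0, ⟨hlt, hj0.1, hvalid⟩, extF_inj fun t htn => ?_⟩)
    rcases Nat.lt_or_ge t i0 with c1 | c1
    · rw [yL_lt htn c1]; exact hlow t c1 htn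
    rcases eq_or_ne t j0 with rfl | c2
    · rw [yL_at (le_of_lt hlt) htn]
      exact fin2_eq_add_one hj0.2
    rcases Nat.lt_or_ge t j0 with c3 | c3
    · rw [yL_mid htn c1 c3]; exact hmid t c1 c3
    · rw [yL_gt htn (le_of_lt hlt) (by omega)]
      exact hhigh t (by omega) htn

/-- canonicalization of a right-shift relation -/
lemma canonR {i j : ℕ} (h : LS y x i j) :
    y = x ∨ (∃ i0 < n, y = flipF x i0) ∨ (∃ i0 j0, PLcond x i0 j0 ∧ y = yL x i0 j0) ∨
      (∃ i0 j0, PRcond x i0 j0 ∧ y = yR x i0 j0) := by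
  by_cases hyx : y = x
  · exact Or.inl hyx
  obtain ⟨hij, hjn, hw⟩ := h
  have hne := diffs_nonempty hyx
  set i0 := (diffs x y).min' hne with hi0def
  set j0 := (diffs x y).max' hne with hj0def
  have hi0 : i0 ∈ diffs x y := Finset.min'_mem _ hne
  have hj0 : j0 ∈ diffs x y := Finset.max'_mem _ hne
  rw [mem_diffs] at hi0 hj0
  have hbnd : ∀ t ∈ diffs x y, i ≤ t ∧ t ≤ j := by
    intro t htm
    rw [mem_diffs] at htm
    constructor
    · by_contra hc
      exact htm.2 ((hw t htm.1).1 (by omega)).symm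
    · by_contra hc
      exact htm.2 ((hw t htm.1).2.2 (by omega)).symm
  have hii0 : i ≤ i0 := (hbnd i0 (Finset.min'_mem _ hne)).1
  have hjj0 : j0 ≤ j := (hbnd j0 (Finset.max'_mem _ hne)).2
  have hi0j0 : i0 ≤ j0 := Finset.min'_le _ _ (Finset.max'_mem _ hne)
  have hlow : ∀ t < i0, t < n → extF y t = extF x t := by
    intro t ht htn
    by_contra hc
    exact absurd (Finset.min'_le _ t (mem_diffs.mpr ⟨htn, hc⟩)) (by omega)
  have hhigh : ∀ t, j0 < t → t < n → extF y t = extF x t := by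
    intro t ht htn
    by_contra hc
    exact absurd (Finset.le_max' _ t (mem_diffs.mpr ⟨htn, hc⟩)) (by omega)
  rcases eq_or_lt_of_le hi0j0 with heq | hlt
  · refine Or.inr (Or.inl ⟨i0, hi0.1, extF_inj fun t htn => ?_⟩)
    rcases eq_or_ne t i0 with rfl | hti
    · rw [extF_flipF_eq htn rfl]
      exact fin2_eq_add_one hi0.2
    · rw [extF_flipF_ne htn hti]
      rcases Nat.lt_or_ge t i0 with hc | hc
      · exact hlow t hc htn
      · exact hhigh t (by omega) htn
  · -- right-shift window [i0, j0]
    have hmid : ∀ t, i0 < t → t ≤ j0 → extF y t = extF x (t - 1) := by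
      intro t h1 h2
      have := (hw (t-1) (by omega)).2.1 (by omega) (by omega)
      have ht1 : t - 1 + 1 = t := by omega
      rw [ht1] at this
      exact this.symm
    have hyi0 : extF y i0 = extF x i0 + 1 := fin2_eq_add_one hi0.2
    have hyj0ne : extF x (j0 - 1) ≠ extF x j0 := by
      intro he
      exact hj0.2 (by rw [hmid j0 hlt le_rfl, he])
    by_cases halt : ∀ t, i0 ≤ t → t < j0 → extF x t ≠ extF x (t + 1)
    · -- alternating window: y is a left canonical form
      have hvalid : extF x i0 ≠ extF x (i0 + 1) := halt i0 le_rfl hlt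
      refine Or.inr (Or.inr (Or.inl ⟨i0, j0, ⟨hlt, hj0.1, hvalid⟩, extF_inj fun t htn => ?_⟩))
      rcases Nat.lt_or_ge t i0 with c1 | c1
      · rw [yL_lt htn c1]; exact hlow t c1 htn
      rcases eq_or_ne t i0 with rfl | c1'
      · rw [yL_mid htn le_rfl hlt]
        exact fin2_trans hi0.2 hvalid
      rcases eq_or_ne t j0 with rfl | c2
      · rw [yL_at (le_of_lt hlt) htn]
        exact fin2_eq_add_one hj0.2
      rcases Nat.lt_or_ge t j0 with c3 | c3
      · rw [yL_mid htn c1 c3]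
        have e1 : extF y t = extF x (t - 1) := hmid t (by omega) (by omega)
        have e2 : extF x (t - 1) ≠ extF x t := by
          have := halt (t - 1) (by omega) (by omega)
          have ht1 : t - 1 + 1 = t := by omega
          rwa [ht1] at this
        rw [e1]
        exact fin2_trans e2 (halt t c1 c3)
      · rw [yL_gt htn (le_of_lt hlt) (by omega)]
        exact hhigh t (by omega) htn
    · -- non-alternating window: y is a right canonical form
      push_neg at halt
      obtain ⟨t0, ht01, ht02, ht03⟩ := halt
      refine Or.inr (Or.inr (Or.inr ⟨i0, j0, ⟨hlt, hj0.1, hyj0ne, t0, ht01, ht02, ht03⟩,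
        extF_inj fun t htn => ?_⟩))
      rcases Nat.lt_or_ge t i0 with c1 | c1
      · rw [yR_lt htn c1]; exact hlow t c1 htn
      rcases eq_or_ne t i0 with rfl | c1'
      · rw [yR_at htn]; exact hyi0
      rcases le_or_gt t j0 with c3 | c3
      · rw [yR_mid htn (by omega) c3]
        exact hmid t (by omega) c3
      · rw [yR_gt htn (le_of_lt hlt) (by omega)]
        exact hhigh t (by omega) htn

end Canonicalize


section BallSet

variable {x : Fin n → Fin 2}

lemma fin2_succ_ne (a : Fin 2) : a + 1 ≠ a := by revert a; decide

/-- the canonical windows are determined by first/last difference -/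
lemma window_unique {y : Fin n → Fin 2} {i j i' j' : ℕ}
    (hij : i ≤ j) (hjn : j < n) (hij' : i' ≤ j') (hjn' : j' < n)
    (L1 : ∀ t, t < i → t < n → extF y t = extF x t) (L2 : extF y i ≠ extF x i)
    (L3 : ∀ t, j < t → t < n → extF y t = extF x t) (L4 : extF y j ≠ extF x j)
    (M1 : ∀ t, t < i' → t < n → extF y t = extF x t) (M2 : extF y i' ≠ extF x i')
    (M3 : ∀ t, j' < t → t < n → extF y t = extF x t) (M4 : extF y j' ≠ extF x j') :
    i = i' ∧ j = j' := by
  have h1 : ¬ i < i' := fun h => L2 (M1 i h (by omega))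
  have h2 : ¬ i' < i := fun h => M2 (L1 i' h (by omega))
  have h3 : ¬ j < j' := fun h => M4 (L3 j' h (by omega))
  have h4 : ¬ j' < j := fun h => L4 (M3 j h (by omega))
  omega

lemma fp_flip1 {i : ℕ} : ∀ t, t < i → t < n → extF (flipF x i) t = extF x t :=
  fun t ht htn => extF_flipF_ne htn (by omega)

lemma fp_flip2 {i : ℕ} (hi : i < n) : extF (flipF x i) i ≠ extF x i := by
  rw [extF_flipF_eq hi rfl]; exact fin2_succ_ne _

lemma fp_flip3 {i : ℕ} : ∀ t, i < t → t < n → extF (flipF x i) t = extF x t :=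
  fun t ht htn => extF_flipF_ne htn (by omega)

lemma fp_yL1 {i j : ℕ} : ∀ t, t < i → t < n → extF (yL x i j) t = extF x t :=
  fun t ht htn => yL_lt htn ht

lemma fp_yL2 {i j : ℕ} (h : PLcond x i j) : extF (yL x i j) i ≠ extF x i := by
  rw [yL_mid (lt_trans h.1 h.2.1) le_rfl h.1]
  exact fun he => h.2.2 he.symm

lemma fp_yL3 {i j : ℕ} (hij : i ≤ j) : ∀ t, j < t → t < n → extF (yL x i j) t = extF x t :=
  fun t ht htn => yL_gt htn hij ht

lemma fp_yL4 {i j : ℕ} (h : PLcond x i j) : extF (yL x i j) j ≠ extF x j := by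
  rw [yL_at (le_of_lt h.1) h.2.1]; exact fin2_succ_ne _

lemma fp_yR1 {i j : ℕ} : ∀ t, t < i → t < n → extF (yR x i j) t = extF x t :=
  fun t ht htn => yR_lt htn ht

lemma fp_yR2 {i j : ℕ} (h : PRcond x i j) : extF (yR x i j) i ≠ extF x i := by
  rw [yR_at (lt_trans h.1 h.2.1)]; exact fin2_succ_ne _

lemma fp_yR3 {i j : ℕ} (hij : i ≤ j) : ∀ t, j < t → t < n → extF (yR x i j) t = extF x t :=
  fun t ht htn => yR_gt htn hij ht

lemma fp_yR4 {i j : ℕ} (h : PRcond x i j) : extF (yR x i j) j ≠ extF x j := by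
  rw [yR_mid h.2.1 h.1 le_rfl]
  exact h.2.2.1

lemma alt_of_yL_eq_yR {i j : ℕ} (hPL : PLcond x i j) (hEq : yL x i j = yR x i j) :
    ∀ t, i ≤ t → t < j → extF x t ≠ extF x (t + 1) := by
  obtain ⟨hij, hjn, hval⟩ := hPL
  have claim : ∀ d, i + d < j → extF x (i + d) ≠ extF x (i + d + 1) := by
    intro d
    induction d with
    | zero => intro _; simpa using hval
    | succ d ih =>
        intro hd
        have prev := ih (by omega)
        set t := i + d + 1 with htdef
        have htn : t < n := by omega
        have e1 : extF (yL x i j) t = extF x (t + 1) := yL_mid htn (by omega) (by omega)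
        have e2 : extF (yR x i j) t = extF x (t - 1) := yR_mid htn (by omega) (by omega)
        have e3 : extF x (t + 1) = extF x (t - 1) := by rw [← e1, ← e2, hEq]
        have ht1 : t - 1 = i + d := by omega
        have goal_eq : i + (d + 1) = t := by omega
        rw [goal_eq]
        intro he
        rw [e3, ht1] at he
        exact prev he.symm
  intro t h1 h2
  obtain ⟨d, rfl⟩ := Nat.exists_eq_add_of_le h1
  exact claim d (by omega)

noncomputable def PLset (x : Fin n → Fin 2) : Finset (ℕ × ℕ) :=
  (Finset.range n ×ˢ Finset.range n).filter fun p => PLcond x p.1 p.2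

noncomputable def PRset (x : Fin n → Fin 2) : Finset (ℕ × ℕ) :=
  (Finset.range n ×ˢ Finset.range n).filter fun p => PRcond x p.1 p.2

lemma mem_PLset {p : ℕ × ℕ} : p ∈ PLset x ↔ PLcond x p.1 p.2 := by
  rw [PLset, Finset.mem_filter, Finset.mem_product, Finset.mem_range, Finset.mem_range]
  exact ⟨fun h => h.2, fun h => ⟨⟨by have := h.1; have := h.2.1; omega, h.2.1⟩, h⟩⟩

lemma mem_PRset {p : ℕ × ℕ} : p ∈ PRset x ↔ PRcond x p.1 p.2 := by
  rw [PRset, Finset.mem_filter, Finset.mem_product, Finset.mem_range, Finset.mem_range]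
  exact ⟨fun h => h.2, fun h => ⟨⟨by have := h.1; have := h.2.1; omega, h.2.1⟩, h⟩⟩

noncomputable def ballSet (x : Fin n → Fin 2) : Finset (Fin n → Fin 2) :=
  (({x} ∪ (Finset.range n).image (flipF x)) ∪
    (PLset x).image (fun p => yL x p.1 p.2)) ∪
    (PRset x).image (fun p => yR x p.1 p.2)

lemma ball_eq_ballSet (hn : 1 ≤ n) : fllBall 2 n 1 x = ballSet x := by
  ext y
  rw [fllBall, Finset.mem_filter]
  simp only [Finset.mem_univ, true_and]
  constructor
  · intro hd
    rw [mem_ball_iff hn] at hd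
    obtain ⟨i, j, hLS | hLS⟩ := hd
    · rcases canonL hLS with rfl | ⟨i0, hi0, rfl⟩ | ⟨i0, j0, hP, rfl⟩
      · exact Finset.mem_union_left _ (Finset.mem_union_left _
          (Finset.mem_union_left _ (Finset.mem_singleton_self _)))
      · exact Finset.mem_union_left _ (Finset.mem_union_left _ (Finset.mem_union_right _
          (Finset.mem_image.mpr ⟨i0, Finset.mem_range.mpr hi0, rfl⟩)))
      · exact Finset.mem_union_left _ (Finset.mem_union_right _
          (Finset.mem_image.mpr ⟨(i0, j0), mem_PLset.mpr hP, rfl⟩))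
    · rcases canonR hLS with rfl | ⟨i0, hi0, rfl⟩ | ⟨i0, j0, hP, rfl⟩ | ⟨i0, j0, hP, rfl⟩
      · exact Finset.mem_union_left _ (Finset.mem_union_left _
          (Finset.mem_union_left _ (Finset.mem_singleton_self _)))
      · exact Finset.mem_union_left _ (Finset.mem_union_left _ (Finset.mem_union_right _
          (Finset.mem_image.mpr ⟨i0, Finset.mem_range.mpr hi0, rfl⟩)))
      · exact Finset.mem_union_left _ (Finset.mem_union_right _
          (Finset.mem_image.mpr ⟨(i0, j0), mem_PLset.mpr hP, rfl⟩))
      · exact Finset.mem_union_right _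
          (Finset.mem_image.mpr ⟨(i0, j0), mem_PRset.mpr hP, rfl⟩)
  · intro hm
    rw [mem_ball_iff hn]
    rcases Finset.mem_union.mp hm with hm | hm
    · rcases Finset.mem_union.mp hm with hm | hm
      · rcases Finset.mem_union.mp hm with hm | hm
        · rw [Finset.mem_singleton] at hm
          subst hm
          exact ⟨0, 0, Or.inl (LS_self hn _)⟩
        · obtain ⟨i, hi, rfl⟩ := Finset.mem_image.mp hm
          rw [Finset.mem_range] at hi
          exact ⟨i, i, Or.inl (LS_flip hi)⟩
      · obtain ⟨p, hp, rfl⟩ := Finset.mem_image.mp hm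
        rw [mem_PLset] at hp
        exact ⟨p.1, p.2, Or.inl (LS_yL hp)⟩
    · obtain ⟨p, hp, rfl⟩ := Finset.mem_image.mp hm
      rw [mem_PRset] at hp
      exact ⟨p.1, p.2, Or.inr (LS_yR hp)⟩

lemma ballSet_card : (ballSet x).card = 1 + n + (PLset x).card + (PRset x).card := by
  have hflip_ne_x : ∀ i < n, flipF x i ≠ x := by
    intro i hi he
    exact fp_flip2 hi (by rw [he])
  have hyL_props : ∀ p ∈ PLset x, PLcond x p.1 p.2 := fun p hp => mem_PLset.mp hp
  -- flips are injective on range n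
  have hflip_inj : Set.InjOn (flipF x) (Finset.range n : Finset ℕ) := by
    intro i hi i' hi' he
    simp only [Finset.coe_range, Set.mem_Iio] at hi hi'
    by_contra hne
    have h1 : extF (flipF x i) i = extF x i + 1 := extF_flipF_eq hi rfl
    have h2 : extF (flipF x i') i = extF x i := extF_flipF_ne hi (by omega)
    rw [he, h2] at h1
    exact fin2_succ_ne _ h1.symm
  have hyL_inj : Set.InjOn (fun p : ℕ × ℕ => yL x p.1 p.2) (PLset x : Set (ℕ × ℕ)) := by
    intro p hp p' hp' he
    rw [Finset.mem_coe, mem_PLset] at hp hp'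
    have he' : yL x p.1 p.2 = yL x p'.1 p'.2 := he
    have := window_unique (x := x) (le_of_lt hp.1) hp.2.1 (le_of_lt hp'.1) hp'.2.1
      fp_yL1 (fp_yL2 hp) (fp_yL3 (le_of_lt hp.1)) (fp_yL4 hp)
      (by intro t ht htn; rw [he']; exact fp_yL1 t ht htn)
      (by rw [he']; exact fp_yL2 hp') (by intro t ht htn; rw [he']; exact fp_yL3 (le_of_lt hp'.1) t ht htn)
      (by rw [he']; exact fp_yL4 hp')
    exact Prod.ext this.1 this.2
  have hyR_inj : Set.InjOn (fun p : ℕ × ℕ => yR x p.1 p.2) (PRset x : Set (ℕ × ℕ)) := by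
    intro p hp p' hp' he
    rw [Finset.mem_coe, mem_PRset] at hp hp'
    have he' : yR x p.1 p.2 = yR x p'.1 p'.2 := he
    have := window_unique (x := x) (le_of_lt hp.1) hp.2.1 (le_of_lt hp'.1) hp'.2.1
      fp_yR1 (fp_yR2 hp) (fp_yR3 (le_of_lt hp.1)) (fp_yR4 hp)
      (by intro t ht htn; rw [he']; exact fp_yR1 t ht htn)
      (by rw [he']; exact fp_yR2 hp') (by intro t ht htn; rw [he']; exact fp_yR3 (le_of_lt hp'.1) t ht htn)
      (by rw [he']; exact fp_yR4 hp')
    exact Prod.ext this.1 this.2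
  -- a function which differs from x at two distinct spots is not x and not a flip
  have two_diff : ∀ (y : Fin n → Fin 2) (i j : ℕ), i < j → j < n →
      extF y i ≠ extF x i → extF y j ≠ extF x j →
      y ∉ ({x} ∪ (Finset.range n).image (flipF x)) := by
    intro y i j hij hjn hdi hdj hmem
    rcases Finset.mem_union.mp hmem with hm | hm
    · rw [Finset.mem_singleton] at hm
      subst hm
      exact hdi rfl
    · obtain ⟨i0, hi0, rfl⟩ := Finset.mem_image.mp hm
      rcases eq_or_ne i i0 with rfl | hne
      · exact hdj (extF_flipF_ne hjn (by omega))
      · exact hdi (extF_flipF_ne (by omega) hne)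
  have d2 : Disjoint ({x} ∪ (Finset.range n).image (flipF x))
      ((PLset x).image (fun p => yL x p.1 p.2)) := by
    rw [Finset.disjoint_right]
    intro y hy
    obtain ⟨p, hp, rfl⟩ := Finset.mem_image.mp hy
    rw [mem_PLset] at hp
    exact two_diff _ p.1 p.2 hp.1 hp.2.1 (fp_yL2 hp) (fp_yL4 hp)
  have d3 : Disjoint (({x} ∪ (Finset.range n).image (flipF x)) ∪
      (PLset x).image (fun p => yL x p.1 p.2))
      ((PRset x).image (fun p => yR x p.1 p.2)) := by
    rw [Finset.disjoint_right]
    intro y hy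
    obtain ⟨p, hp, rfl⟩ := Finset.mem_image.mp hy
    rw [mem_PRset] at hp
    intro hmem
    rcases Finset.mem_union.mp hmem with hm | hm
    · exact two_diff _ p.1 p.2 hp.1 hp.2.1 (fp_yR2 hp) (fp_yR4 hp) hm
    · obtain ⟨p', hp', he⟩ := Finset.mem_image.mp hm
      rw [mem_PLset] at hp'
      have huniq := window_unique (x := x) (le_of_lt hp'.1) hp'.2.1 (le_of_lt hp.1) hp.2.1
        fp_yL1 (fp_yL2 hp') (fp_yL3 (le_of_lt hp'.1)) (fp_yL4 hp')
        (by intro t ht htn; rw [he]; exact fp_yR1 t ht htn)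
        (by rw [he]; exact fp_yR2 hp) (by intro t ht htn; rw [he]; exact fp_yR3 (le_of_lt hp.1) t ht htn)
        (by rw [he]; exact fp_yR4 hp)
      obtain ⟨hi, hj⟩ := huniq
      obtain ⟨t0, ht01, ht02, ht03⟩ := hp.2.2.2
      have halt := alt_of_yL_eq_yR (i := p'.1) (j := p'.2) hp' (by rw [he, hi, hj])
      exact halt t0 (by omega) (by omega) ht03
  have d1 : Disjoint ({x} : Finset (Fin n → Fin 2)) ((Finset.range n).image (flipF x)) := by
    rw [Finset.disjoint_left]
    intro y hy
    rw [Finset.mem_singleton] at hy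
    subst hy
    intro hm
    obtain ⟨i, hi, he⟩ := Finset.mem_image.mp hm
    rw [Finset.mem_range] at hi
    exact hflip_ne_x i hi he
  rw [ballSet, Finset.card_union_of_disjoint d3, Finset.card_union_of_disjoint d2,
    Finset.card_union_of_disjoint d1, Finset.card_singleton,
    Finset.card_image_of_injOn hflip_inj, Finset.card_range,
    Finset.card_image_of_injOn hyL_inj, Finset.card_image_of_injOn hyR_inj]

end BallSet


section Counting

variable {x : Fin n → Fin 2}

noncomputable def Dset (x : Fin n → Fin 2) : Finset ℕ :=
  (Finset.range (n - 1)).filter fun i => extF x i ≠ extF x (i + 1)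

noncomputable def PRfull (x : Fin n → Fin 2) : Finset (ℕ × ℕ) :=
  (Finset.range n ×ˢ Finset.range n).filter fun p =>
    p.1 < p.2 ∧ extF x (p.2 - 1) ≠ extF x p.2

noncomputable def Alt2 (x : Fin n → Fin 2) : Finset (ℕ × ℕ) :=
  (Finset.range n ×ˢ Finset.range n).filter fun p =>
    p.1 < p.2 ∧ ∀ t, p.1 ≤ t → t < p.2 → extF x t ≠ extF x (t + 1)

lemma Alt2_subset_PRfull : Alt2 x ⊆ PRfull x := by
  intro p hp
  rw [Alt2, Finset.mem_filter] at hp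
  rw [PRfull, Finset.mem_filter]
  refine ⟨hp.1, hp.2.1, ?_⟩
  have h1 := hp.2.2 (p.2 - 1) (by omega) (by omega)
  have : p.2 - 1 + 1 = p.2 := by omega
  rwa [this] at h1

lemma PRset_eq : PRset x = PRfull x \ Alt2 x := by
  ext p
  rw [mem_PRset, Finset.mem_sdiff, PRfull, Alt2, Finset.mem_filter, Finset.mem_filter,
    Finset.mem_product, Finset.mem_range, Finset.mem_range]
  constructor
  · rintro ⟨h1, h2, h3, t, ht1, ht2, ht3⟩
    refine ⟨⟨⟨by omega, h2⟩, h1, h3⟩, fun hc => ?_⟩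
    exact hc.2.2 t ht1 ht2 ht3
  · rintro ⟨⟨⟨hp1, hp2⟩, h1, h3⟩, hc⟩
    refine ⟨h1, hp2, h3, ?_⟩
    by_contra hno
    push_neg at hno
    exact hc ⟨⟨hp1, hp2⟩, h1, fun t a b => hno t a b⟩

lemma PRset_card : (PRset x).card = (PRfull x).card - (Alt2 x).card := by
  rw [PRset_eq, Finset.card_sdiff_of_subset Alt2_subset_PRfull]

lemma filter_lt_eq {i : ℕ} : (Finset.range n).filter (fun j => i < j) = Finset.Ico (i+1) n := by
  ext j
  simp [Finset.mem_Ico, Finset.mem_range, Finset.mem_filter]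
  omega

lemma filter_gt_eq {j : ℕ} (hj : j < n) :
    (Finset.range n).filter (fun i => i < j) = Finset.range j := by
  ext i
  simp [Finset.mem_range, Finset.mem_filter]
  omega

lemma PL_card_eq : (PLset x).card =
    ∑ i ∈ Finset.range n, (if extF x i ≠ extF x (i + 1) then n - 1 - i else 0) := by
  rw [PLset, Finset.card_filter, Finset.sum_product]
  refine Finset.sum_congr rfl fun i hi => ?_
  rw [Finset.mem_range] at hi
  by_cases hc : extF x i ≠ extF x (i + 1)
  · rw [if_pos hc]
    have : ∀ j ∈ Finset.range n,
        (if PLcond x (i, j).1 (i, j).2 then 1 else 0) = (if i < j then 1 else 0) := by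
      intro j hj
      rw [Finset.mem_range] at hj
      by_cases h2 : i < j
      · rw [if_pos h2, if_pos ⟨h2, hj, hc⟩]
      · rw [if_neg h2, if_neg (fun hP => h2 hP.1)]
    rw [Finset.sum_congr rfl this, ← Finset.card_filter, filter_lt_eq, Nat.card_Ico]
    omega
  · rw [if_neg hc]
    refine Finset.sum_eq_zero fun j hj => ?_
    rw [if_neg (fun hP => hc hP.2.2)]

lemma PRfull_card_eq : (PRfull x).card =
    ∑ j ∈ Finset.range n, (if 1 ≤ j ∧ extF x (j - 1) ≠ extF x j then j else 0) := by
  rw [PRfull, Finset.card_filter, Finset.sum_product]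
  rw [Finset.sum_comm]
  refine Finset.sum_congr rfl fun j hj => ?_
  rw [Finset.mem_range] at hj
  by_cases hc : 1 ≤ j ∧ extF x (j - 1) ≠ extF x j
  · rw [if_pos hc]
    have : ∀ i ∈ Finset.range n,
        (if (i, j).1 < (i, j).2 ∧ extF x ((i, j).2 - 1) ≠ extF x (i, j).2 then 1 else 0)
          = (if i < j then 1 else 0) := by
      intro i hi
      by_cases h2 : i < j
      · rw [if_pos h2, if_pos ⟨h2, hc.2⟩]
      · rw [if_neg h2, if_neg (fun hP => h2 hP.1)]
    rw [Finset.sum_congr rfl this, ← Finset.card_filter, filter_gt_eq hj, Finset.card_range]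
  · rw [if_neg hc]
    refine Finset.sum_eq_zero fun i hi => ?_
    rw [if_neg]
    rintro ⟨h1, h2⟩
    exact hc ⟨by omega, h2⟩

lemma PL_PR_card (hn : 1 ≤ n) :
    (PLset x).card + (PRfull x).card = n * (Dset x).card := by
  rw [PL_card_eq, PRfull_card_eq]
  have hrange : Finset.range n = Finset.range ((n - 1) + 1) := by
    congr 1
    omega
  rw [hrange, Finset.sum_range_succ, Finset.sum_range_succ']
  have e1 : (if extF x ((n-1):ℕ) ≠ extF x ((n-1) + 1) then n - 1 - (n-1) else 0) = 0 := by
    split <;> omega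
  have e2 : (if 1 ≤ (0:ℕ) ∧ extF x ((0:ℕ) - 1) ≠ extF x 0 then (0:ℕ) else 0) = 0 := by
    simp
  rw [e1, e2, add_zero, add_zero, ← Finset.sum_add_distrib, Dset, Finset.card_filter,
    Finset.mul_sum]
  refine Finset.sum_congr rfl fun i hi => ?_
  rw [Finset.mem_range] at hi
  by_cases hc : extF x i ≠ extF x (i + 1)
  · rw [if_pos hc, if_pos ⟨by omega, by simpa using hc⟩, if_pos hc, mul_one]
    omega
  · rw [if_neg hc, if_neg (fun h => hc (by simpa using h.2)), if_neg hc]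
    simp

end Counting




section Segs

variable {x : Fin n → Fin 2}

lemma blockSeg_get {i j u : ℕ} (hj : j < n)
    (hu : u < (blockSeg (List.ofFn x) i j).length) :
    (blockSeg (List.ofFn x) i j).get ⟨u, hu⟩ = extF x (i + u) := by
  have hlen : (blockSeg (List.ofFn x) i j).length = min (j + 1 - i) (n - i) := by
    simp [blockSeg]
  simp only [blockSeg, List.get_eq_getElem, List.getElem_take, List.getElem_drop]
  exact getElem_ofFn' x rfl _

lemma blockSeg_length {i j : ℕ} (hij : i ≤ j) (hj : j < n) :
    (blockSeg (List.ofFn x) i j).length = j + 1 - i := by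
  simp [blockSeg]
  omega

lemma isAlt_block_iff {i j : ℕ} (hij : i ≤ j) (hj : j < n) :
    IsAltList (blockSeg (List.ofFn x) i j) ↔
      ∀ t, i ≤ t → t < j → extF x t ≠ extF x (t + 1) := by
  have hlen := blockSeg_length (x := x) hij hj
  constructor
  · rintro ⟨h1, -⟩ t ht1 ht2
    have := h1 (t - i) (by omega)
    rw [blockSeg_get hj, blockSeg_get hj] at this
    rw [show i + (t - i) = t by omega, show i + (t - i + 1) = t + 1 by omega] at this
    exact this
  · intro h
    constructor
    · intro u hu
      rw [blockSeg_get hj, blockSeg_get hj]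
      exact h (i + u) (by omega) (by omega)
    · intro u hu
      rw [blockSeg_get hj, blockSeg_get hj]
      exact fin2_trans (h (i + u) (by omega) (by omega)) (h (i + u + 1) (by omega) (by omega))

lemma isMaxAltSeg_iff {i j : ℕ} :
    IsMaxAltSeg (List.ofFn x) i j ↔
      (i ≤ j ∧ j < n ∧ (∀ t, i ≤ t → t < j → extF x t ≠ extF x (t + 1)) ∧
       (i = 0 ∨ extF x (i - 1) = extF x i) ∧ (j = n - 1 ∨ extF x j = extF x (j + 1))) := by
  rw [IsMaxAltSeg, List.length_ofFn]
  constructor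
  · rintro ⟨hij, hj, halt, hleft, hright⟩
    have halt' := (isAlt_block_iff hij hj).mp halt
    refine ⟨hij, hj, halt', ?_, ?_⟩
    · by_cases hi0 : i = 0
      · exact Or.inl hi0
      rcases hleft with h0 | hnot
      · exact Or.inl h0
      right
      by_contra hne
      apply hnot
      rw [isAlt_block_iff (by omega) hj]
      intro t ht1 ht2
      rcases eq_or_ne t (i - 1) with rfl | htne
      · rw [show i - 1 + 1 = i by omega]
        exact hne
      · exact halt' t (by omega) ht2
    · by_cases hj' : j = n - 1
      · exact Or.inl hj'
      rcases hright with h0 | hnot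
      · exact Or.inl h0
      right
      by_contra hne
      apply hnot
      rw [isAlt_block_iff (by omega) (by omega)]
      intro t ht1 ht2
      rcases eq_or_ne t j with rfl | htne
      · exact hne
      · exact halt' t ht1 (by omega)
  · rintro ⟨hij, hj, halt, hleft, hright⟩
    refine ⟨hij, hj, (isAlt_block_iff hij hj).mpr halt, ?_, ?_⟩
    · rcases hleft with h0 | heq
      · exact Or.inl h0
      by_cases hi0 : i = 0
      · exact Or.inl hi0
      right
      intro hAlt
      rw [isAlt_block_iff (by omega) hj] at hAlt
      exact (hAlt (i - 1) le_rfl (by omega)) (by rw [show i - 1 + 1 = i by omega]; exact heq)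
    · rcases hright with h0 | heq
      · exact Or.inl h0
      by_cases hj' : j = n - 1
      · exact Or.inl hj'
      right
      intro hAlt
      rw [isAlt_block_iff (by omega) (by omega)] at hAlt
      exact (hAlt j (by omega) (by omega)) heq

lemma mem_T {p : ℕ × ℕ} :
    p ∈ maxAltSegs (List.ofFn x) ↔
      (p.1 ≤ p.2 ∧ p.2 < n ∧ (∀ t, p.1 ≤ t → t < p.2 → extF x t ≠ extF x (t + 1)) ∧
       (p.1 = 0 ∨ extF x (p.1 - 1) = extF x p.1) ∧
       (p.2 = n - 1 ∨ extF x p.2 = extF x (p.2 + 1))) := by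
  rw [maxAltSegs, Finset.mem_filter, Finset.mem_product, Finset.mem_range, Finset.mem_range,
    List.length_ofFn, isMaxAltSeg_iff]
  constructor
  · exact fun h => h.2
  · intro h
    exact ⟨⟨by omega, h.2.1⟩, h⟩

lemma seg_cover (t : ℕ) (ht : t < n) :
    ∃ p : ℕ × ℕ, p ∈ maxAltSegs (List.ofFn x) ∧ p.1 ≤ t ∧ t ≤ p.2 := by
  set St := (Finset.range (t + 1)).filter
    (fun s => s = 0 ∨ extF x (s - 1) = extF x s) with hStdef
  have hStne : St.Nonempty := ⟨0, by simp [hStdef]⟩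
  set En := (Finset.Icc t (n - 1)).filter
    (fun s => s = n - 1 ∨ extF x s = extF x (s + 1)) with hEndef
  have hEnne : En.Nonempty := ⟨n - 1, by simp [hEndef]; omega⟩
  set i := St.max' hStne with hidef
  set j := En.min' hEnne with hjdef
  have hiSt : i ∈ St := Finset.max'_mem _ _
  have hjEn : j ∈ En := Finset.min'_mem _ _
  rw [hStdef, Finset.mem_filter, Finset.mem_range] at hiSt
  rw [hEndef, Finset.mem_filter, Finset.mem_Icc] at hjEn
  have hit : i ≤ t := by omega
  have htj : t ≤ j := hjEn.1.1
  have hjn : j < n := by omega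
  refine ⟨(i, j), mem_T.mpr ⟨by omega, hjn, ?_, hiSt.2, ?_⟩, hit, htj⟩
  · intro u hu1 hu2
    by_contra heq
    rcases le_or_gt (u + 1) t with hc | hc
    · have : u + 1 ∈ St := by
        rw [hStdef, Finset.mem_filter, Finset.mem_range]
        refine ⟨by omega, Or.inr ?_⟩
        rw [show u + 1 - 1 = u by omega]
        exact heq
      have := Finset.le_max' St (u + 1) this
      omega
    · have : u ∈ En := by
        rw [hEndef, Finset.mem_filter, Finset.mem_Icc]
        exact ⟨⟨by omega, by omega⟩, Or.inr heq⟩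
      have := Finset.min'_le En u this
      omega
  · rcases hjEn.2 with h0 | heq
    · exact Or.inl h0
    · exact Or.inr heq

lemma seg_disj {p q : ℕ × ℕ} (hp : p ∈ maxAltSegs (List.ofFn x))
    (hq : q ∈ maxAltSegs (List.ofFn x)) {t : ℕ}
    (h1 : p.1 ≤ t) (h2 : t ≤ p.2) (h3 : q.1 ≤ t) (h4 : t ≤ q.2) : p = q := by
  rw [mem_T] at hp hq
  have key : ∀ (p q : ℕ × ℕ),
      (p.1 ≤ p.2 ∧ p.2 < n ∧ (∀ t, p.1 ≤ t → t < p.2 → extF x t ≠ extF x (t + 1)) ∧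
       (p.1 = 0 ∨ extF x (p.1 - 1) = extF x p.1) ∧
       (p.2 = n - 1 ∨ extF x p.2 = extF x (p.2 + 1))) →
      (q.1 ≤ q.2 ∧ q.2 < n ∧ (∀ t, q.1 ≤ t → t < q.2 → extF x t ≠ extF x (t + 1)) ∧
       (q.1 = 0 ∨ extF x (q.1 - 1) = extF x q.1) ∧
       (q.2 = n - 1 ∨ extF x q.2 = extF x (q.2 + 1))) →
      ∀ t, p.1 ≤ t → t ≤ p.2 → q.1 ≤ t → t ≤ q.2 → ¬ (p.1 < q.1) := by
    rintro p q hp hq t h1 h2 h3 h4 hlt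
    have hq1 : extF x (q.1 - 1) = extF x q.1 := by
      rcases hq.2.2.2.1 with h0 | he
      · omega
      · exact he
    have := hp.2.2.1 (q.1 - 1) (by omega) (by omega)
    rw [show q.1 - 1 + 1 = q.1 by omega] at this
    exact this hq1
  have key2 : ∀ (p q : ℕ × ℕ),
      (p.1 ≤ p.2 ∧ p.2 < n ∧ (∀ t, p.1 ≤ t → t < p.2 → extF x t ≠ extF x (t + 1)) ∧
       (p.1 = 0 ∨ extF x (p.1 - 1) = extF x p.1) ∧
       (p.2 = n - 1 ∨ extF x p.2 = extF x (p.2 + 1))) →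
      (q.1 ≤ q.2 ∧ q.2 < n ∧ (∀ t, q.1 ≤ t → t < q.2 → extF x t ≠ extF x (t + 1)) ∧
       (q.1 = 0 ∨ extF x (q.1 - 1) = extF x q.1) ∧
       (q.2 = n - 1 ∨ extF x q.2 = extF x (q.2 + 1))) →
      ∀ t, p.1 ≤ t → t ≤ p.2 → q.1 ≤ t → t ≤ q.2 → ¬ (p.2 < q.2) := by
    rintro p q hp hq t h1 h2 h3 h4 hlt
    have hp2 : extF x p.2 = extF x (p.2 + 1) := by
      rcases hp.2.2.2.2 with h0 | he
      · omega
      · exact he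
    exact (hq.2.2.1 p.2 (by omega) (by omega)) hp2
  have e1 : p.1 = q.1 := by
    have := key p q hp hq t h1 h2 h3 h4
    have := key q p hq hp t h3 h4 h1 h2
    omega
  have e2 : p.2 = q.2 := by
    have := key2 p q hp hq t h1 h2 h3 h4
    have := key2 q p hq hp t h3 h4 h1 h2
    omega
  exact Prod.ext e1 e2


lemma range_eq_biUnion :
    Finset.range n = (maxAltSegs (List.ofFn x)).biUnion (fun p => Finset.Icc p.1 p.2) := by
  ext t
  rw [Finset.mem_range, Finset.mem_biUnion]
  constructor
  · intro ht
    obtain ⟨p, hp, h1, h2⟩ := seg_cover t ht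
    exact ⟨p, hp, Finset.mem_Icc.mpr ⟨h1, h2⟩⟩
  · rintro ⟨p, hp, hm⟩
    rw [Finset.mem_Icc] at hm
    have := (mem_T.mp hp).2.1
    omega

lemma segs_pairwise_disj :
    ∀ p ∈ maxAltSegs (List.ofFn x), ∀ q ∈ maxAltSegs (List.ofFn x), p ≠ q →
      Disjoint (Finset.Icc p.1 p.2) (Finset.Icc q.1 q.2) := by
  intro p hp q hq hne
  rw [Finset.disjoint_left]
  intro t htp htq
  rw [Finset.mem_Icc] at htp htq
  exact hne (seg_disj hp hq htp.1 htp.2 htq.1 htq.2)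

lemma sum_seg_len :
    ∑ p ∈ maxAltSegs (List.ofFn x), (p.2 + 1 - p.1) = n := by
  have h := Finset.card_biUnion (segs_pairwise_disj (x := x))
  rw [← range_eq_biUnion, Finset.card_range] at h
  conv_rhs => rw [h]
  exact Finset.sum_congr rfl fun p _ => (Nat.card_Icc p.1 p.2).symm

lemma Dset_eq_biUnion :
    Dset x = (maxAltSegs (List.ofFn x)).biUnion (fun p => Finset.Ico p.1 p.2) := by
  ext t
  rw [Dset, Finset.mem_filter, Finset.mem_range, Finset.mem_biUnion]
  constructor
  · rintro ⟨ht, hne⟩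
    obtain ⟨p, hp, h1, h2⟩ := seg_cover (x := x) t (by omega)
    refine ⟨p, hp, Finset.mem_Ico.mpr ⟨h1, ?_⟩⟩
    rcases eq_or_lt_of_le h2 with heq | hlt
    · exfalso
      rcases (mem_T.mp hp).2.2.2.2 with h0 | he
      · omega
      · rw [← heq] at he
        exact hne he
    · exact hlt
  · rintro ⟨p, hp, hm⟩
    rw [Finset.mem_Ico] at hm
    have hT := mem_T.mp hp
    exact ⟨by omega, hT.2.2.1 t hm.1 hm.2⟩

lemma Dset_card :
    (Dset x).card = ∑ p ∈ maxAltSegs (List.ofFn x), (p.2 - p.1) := by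
  rw [Dset_eq_biUnion, Finset.card_biUnion]
  · exact Finset.sum_congr rfl fun p _ => Nat.card_Ico p.1 p.2
  · intro p hp q hq hne
    have := segs_pairwise_disj p hp q hq hne
    exact this.mono (Finset.Ico_subset_Icc_self) (Finset.Ico_subset_Icc_self)

lemma Alt2_eq_biUnion :
    Alt2 x = (maxAltSegs (List.ofFn x)).biUnion
      (fun p => (Finset.Icc p.1 p.2 ×ˢ Finset.Icc p.1 p.2).filter fun q => q.1 < q.2) := by
  ext q
  rw [Alt2, Finset.mem_filter, Finset.mem_product, Finset.mem_range, Finset.mem_range,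
    Finset.mem_biUnion]
  constructor
  · rintro ⟨⟨h1, h2⟩, hlt, halt⟩
    obtain ⟨p, hp, hc1, hc2⟩ := seg_cover (x := x) q.1 h1
    have hT := mem_T.mp hp
    have hj2 : q.2 ≤ p.2 := by
      by_contra hc
      have hp2 : extF x p.2 = extF x (p.2 + 1) := by
        rcases hT.2.2.2.2 with h0 | he
        · omega
        · exact he
      exact (halt p.2 (by omega) (by omega)) hp2
    refine ⟨p, hp, Finset.mem_filter.mpr ⟨Finset.mem_product.mpr ⟨?_, ?_⟩, hlt⟩⟩
    · exact Finset.mem_Icc.mpr ⟨hc1, hc2⟩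
    · exact Finset.mem_Icc.mpr ⟨by omega, hj2⟩
  · rintro ⟨p, hp, hm⟩
    rw [Finset.mem_filter, Finset.mem_product, Finset.mem_Icc, Finset.mem_Icc] at hm
    obtain ⟨⟨hm1, hm2⟩, hlt⟩ := hm
    have hT := mem_T.mp hp
    refine ⟨⟨by omega, by omega⟩, hlt, fun t ht1 ht2 => ?_⟩
    exact hT.2.2.1 t (by omega) (by omega)

lemma pairs_card (a b : ℕ) :
    2 * ((Finset.Icc a b ×ˢ Finset.Icc a b).filter fun q : ℕ × ℕ => q.1 < q.2).card
      = (b + 1 - a) * (b + 1 - a - 1) := by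
  rcases le_or_gt a b with hab | hab
  · have : ((Finset.Icc a b ×ˢ Finset.Icc a b).filter fun q : ℕ × ℕ => q.1 < q.2).card
        = ∑ j ∈ Finset.Icc a b, (j - a) := by
      rw [Finset.card_filter, Finset.sum_product, Finset.sum_comm]
      refine Finset.sum_congr rfl fun j hj => ?_
      rw [Finset.mem_Icc] at hj
      have : ∀ i ∈ Finset.Icc a b, (if (i, j).1 < (i, j).2 then 1 else 0)
          = (if i < j then 1 else 0) := fun i _ => rfl
      rw [Finset.sum_congr rfl this, ← Finset.card_filter]
      have : (Finset.Icc a b).filter (fun i => i < j) = Finset.Ico a j := by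
        ext i
        simp [Finset.mem_Icc, Finset.mem_Ico, Finset.mem_filter]
        omega
      rw [this, Nat.card_Ico]
    rw [this]
    have : ∑ j ∈ Finset.Icc a b, (j - a) = ∑ u ∈ Finset.range (b + 1 - a), u := by
      rw [show Finset.Icc a b = Finset.Ico a (b + 1) by rfl, Finset.sum_Ico_eq_sum_range]
      exact Finset.sum_congr rfl fun u _ => by omega
    rw [this, mul_comm, Finset.sum_range_id_mul_two]
  · have h1 : Finset.Icc a b = ∅ := Finset.Icc_eq_empty (by omega)
    rw [h1]
    simp
    omega

lemma Alt2_card :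
    2 * (Alt2 x).card = ∑ p ∈ maxAltSegs (List.ofFn x),
      (p.2 + 1 - p.1) * (p.2 + 1 - p.1 - 1) := by
  rw [Alt2_eq_biUnion, Finset.card_biUnion, Finset.mul_sum]
  · refine Finset.sum_congr rfl fun p hp => ?_
    have := mem_T.mp hp
    rw [pairs_card]
  · intro p hp q hq hne
    rw [Function.onFun, Finset.disjoint_left]
    intro r hr1 hr2
    rw [Finset.mem_filter, Finset.mem_product, Finset.mem_Icc, Finset.mem_Icc] at hr1 hr2
    exact hne (seg_disj hp hq hr1.1.1.1 hr1.1.1.2 hr2.1.1.1 hr2.1.1.2)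

end Segs


end FLLwork

open FLLwork in
set_option maxHeartbeats 2000000 in
/-- Size of the FLL `1`-ball centered at an `a`-balanced binary
sequence, where `k` is the unique integer with `1 ≤ k ≤ a` and `k ≡ n (mod a)`. -/
theorem fll_ball_card_balanced (n a k : ℕ) (hn : 1 ≤ n) (ha1 : 1 ≤ a) (han : a ≤ n)
    (hk1 : 1 ≤ k) (hk2 : k ≤ a) (hk3 : k % a = n % a)
    (x : Fin n → Fin 2) (hx : IsBalanced n a x) :
    ((fllBall 2 n 1 x).card : ℚ) =
      ((n : ℚ) + 1 - a) * ((n : ℚ) - 1) + 2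
        - ((k : ℚ) / 2) * ((((n + a - 1) / a : ℕ) : ℚ) - 1) * ((((n + a - 1) / a : ℕ) : ℚ) - 2)
        - (((a : ℚ) - k) / 2) * ((((n + a - 1) / a : ℕ) : ℚ) - 2)
            * ((((n + a - 1) / a : ℕ) : ℚ) - 3) := by
  classical
  set c : ℕ := (n + a - 1) / a with hcdef
  have hc1 : 1 ≤ c := by
    rw [hcdef, Nat.le_div_iff_mul_le (by omega)]
    omega
  set T := maxAltSegs (List.ofFn x) with hTdef
  have hTcard : T.card = a := hx.1
  have hlen : ∀ p ∈ T, p.2 + 1 - p.1 = c ∨ p.2 + 1 - p.1 = c - 1 := hx.2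
  set m := (T.filter fun p => p.2 + 1 - p.1 = c).card with hmdef
  have hm_le : m ≤ a := by
    rw [hmdef, ← hTcard]
    exact Finset.card_filter_le _ _
  have hsum : ∑ p ∈ T, (p.2 + 1 - p.1) = n := FLLwork.sum_seg_len
  have hsum2 : ∑ p ∈ T, (p.2 + 1 - p.1) = a * (c - 1) + m := by
    have hterm : ∀ p ∈ T, p.2 + 1 - p.1
        = (c - 1) + (if p.2 + 1 - p.1 = c then 1 else 0) := by
      intro p hp
      rcases hlen p hp with h | h
      · rw [if_pos h]
        omega
      · by_cases h2 : p.2 + 1 - p.1 = c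
        · rw [if_pos h2]
          omega
        · rw [if_neg h2]
          omega
    rw [Finset.sum_congr rfl hterm, Finset.sum_add_distrib, Finset.sum_const,
      ← Finset.card_filter, smul_eq_mul, hTcard, ← hmdef]
  have hnm : n = a * (c - 1) + m := by omega
  have hm1 : 1 ≤ m := by
    by_contra h
    have hm0 : m = 0 := by omega
    have hcc : c = c - 1 + (a-1)/a := by
      conv_lhs => rw [hcdef, show n + a - 1 = a * (c - 1) + (a - 1) by omega]
      rw [Nat.mul_add_div (by omega)]
    have hdiv : (a-1)/a = 0 := Nat.div_eq_of_lt (by omega)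
    omega
  have hkm : k = m := by
    have h1 : n % a = m % a := by
      conv_lhs => rw [show n = m + a * (c - 1) by omega]
      rw [Nat.add_mul_mod_self_left]
    have h2 : k % a = m % a := by rw [hk3, h1]
    by_cases hka : k = a
    · by_cases hma : m = a
      · omega
      · have e1 : m % a = m := Nat.mod_eq_of_lt (by omega)
        have e2 : k % a = 0 := by rw [hka, Nat.mod_self]
        omega
    · have e1 : k % a = k := Nat.mod_eq_of_lt (by omega)
      by_cases hma : m = a
      · have e2 : m % a = 0 := by rw [hma, Nat.mod_self]
        omega
      · have e2 : m % a = m := Nat.mod_eq_of_lt (by omega)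
        omega
  have hW : ∑ p ∈ T, (p.2 + 1 - p.1) * (p.2 + 1 - p.1 - 1)
      = m * (c * (c - 1)) + (a - m) * ((c - 1) * (c - 2)) := by
    rw [← Finset.sum_filter_add_sum_filter_not T (fun p => p.2 + 1 - p.1 = c)]
    have hcompl : (T.filter fun p => ¬ (p.2 + 1 - p.1 = c)).card = a - m := by
      have := Finset.card_filter_add_card_filter_not
        (s := T) (p := fun p => p.2 + 1 - p.1 = c)
      omega
    congr 1
    · rw [Finset.sum_congr rfl (fun p hp => ?_), Finset.sum_const, smul_eq_mul, ← hmdef]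
      have := (Finset.mem_filter.mp hp).2
      rw [this]
    · rw [Finset.sum_congr rfl (fun p hp => ?_), Finset.sum_const, smul_eq_mul, hcompl]
      rw [Finset.mem_filter] at hp
      rcases hlen p hp.1 with h | h
      · exact absurd h hp.2
      · rw [h, show c - 1 - 1 = c - 2 by omega]
  -- ball cardinality
  have hball : (fllBall 2 n 1 x).card
      = 1 + n + (PLset x).card + (PRset x).card := by
    rw [ball_eq_ballSet hn, ballSet_card]
  have hPRc : (PRset x).card = (PRfull x).card - (Alt2 x).card := PRset_card
  have hA2le : (Alt2 x).card ≤ (PRfull x).card := Finset.card_le_card Alt2_subset_PRfull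
  have hPLPR : (PLset x).card + (PRfull x).card = n * (Dset x).card := PL_PR_card hn
  have hD : (Dset x).card = n - a := by
    have e : ∑ p ∈ T, ((p.2 - p.1) + 1) = n := by
      rw [← hsum]
      exact Finset.sum_congr rfl fun p hp => by
        have := (mem_T.mp hp).1
        omega
    rw [Finset.sum_add_distrib, Finset.sum_const, smul_eq_mul, mul_one, hTcard] at e
    have hDc := Dset_card (x := x)
    rw [← hTdef] at hDc
    omega
  have hA2 : 2 * (Alt2 x).card = m * (c * (c - 1)) + (a - m) * ((c - 1) * (c - 2)) := by
    rw [Alt2_card, ← hTdef, hW]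
  rw [hD] at hPLPR
  have hNat2 : (fllBall 2 n 1 x).card + (Alt2 x).card = 1 + n + n * (n - a) := by
    omega
  -- move to ℚ
  have hQ : ((fllBall 2 n 1 x).card : ℚ) + ((Alt2 x).card : ℚ)
      = 1 + n + n * ((n : ℚ) - a) := by
    have h2 : (((fllBall 2 n 1 x).card + (Alt2 x).card : ℕ) : ℚ)
        = ((1 + n + n * (n - a) : ℕ) : ℚ) := by rw [hNat2]
    push_cast [Nat.cast_sub han] at h2
    exact h2
  have hA2Q : 2 * ((Alt2 x).card : ℚ)
      = k * ((c : ℚ) * ((c : ℚ) - 1)) + ((a : ℚ) - k) * (((c : ℚ) - 1) * ((c : ℚ) - 2)) := by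
    rw [hkm]
    have e1 : ((m * (c * (c - 1)) : ℕ) : ℚ) = m * ((c : ℚ) * ((c : ℚ) - 1)) := by
      push_cast [Nat.cast_sub hc1]
      ring
    have e2 : (((a - m) * ((c - 1) * (c - 2)) : ℕ) : ℚ)
        = ((a : ℚ) - m) * (((c : ℚ) - 1) * ((c : ℚ) - 2)) := by
      by_cases hc2 : c = 1
      · rw [hc2]
        norm_num
      · push_cast [Nat.cast_sub hc1, Nat.cast_sub (show 2 ≤ c by omega),
          Nat.cast_sub hm_le]
        ring
    have h2 : ((2 * (Alt2 x).card : ℕ) : ℚ)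
        = ((m * (c * (c - 1)) : ℕ) : ℚ) + (((a - m) * ((c - 1) * (c - 2)) : ℕ) : ℚ) := by
      rw [hA2]
      push_cast
      ring
    rw [e1, e2] at h2
    rw [← h2]
    push_cast
    ring
  have hNQ : (n : ℚ) = a * ((c : ℚ) - 1) + m := by
    have h2 : ((n : ℕ) : ℚ) = ((a * (c - 1) + m : ℕ) : ℚ) := by rw [← hnm]
    push_cast [Nat.cast_sub hc1] at h2
    exact h2
  have hballQ : ((fllBall 2 n 1 x).card : ℚ)
      = 1 + n + n * ((n : ℚ) - a) - ((Alt2 x).card : ℚ) := by linarith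
  have hA2Q' : ((Alt2 x).card : ℚ)
      = (k * ((c : ℚ) * ((c : ℚ) - 1)) + ((a : ℚ) - k) * (((c : ℚ) - 1) * ((c : ℚ) - 2))) / 2 := by
    linarith
  rw [hballQ, hA2Q', hNQ, ← hkm]
  ring
end

section
/- Let n > 1 and 2 ≤ α ≤ n be integers. For every α-balanced sequence x ∈ Z_2^n and every (α−1)-balanced sequence y ∈ Z_2^n, one has |L_1(x)| > |L_1(y)| if and only if n > 2(α−1)α. -/
open scoped Classical

/-! ### Auxiliary development -/

section Aux

variable {n : ℕ}

/-- Totalized version of a word. -/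
def XF (n : ℕ) (x : Fin n → Fin 2) (k : ℕ) : Fin 2 := if h : k < n then x ⟨k, h⟩ else 0

lemma XF_lt (x : Fin n → Fin 2) {k : ℕ} (h : k < n) : XF n x k = x ⟨k, h⟩ := dif_pos h

lemma ofFn_getElem (x : Fin n → Fin 2) {k : ℕ} (h : k < (List.ofFn x).length) :
    (List.ofFn x)[k] = XF n x k := by
  rw [List.getElem_ofFn]
  exact (XF_lt x (by simpa using h)).symm

lemma lcsLen_bddAbove (x y : List (Fin 2)) :
    BddAbove {k | ∃ z : List (Fin 2), z.Sublist x ∧ z.Sublist y ∧ z.length = k} := by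
  refine ⟨x.length, fun k hk => ?_⟩
  obtain ⟨z, hzx, _, hzl⟩ := hk
  exact hzl ▸ hzx.length_le

lemma lcsLen_nonempty (x y : List (Fin 2)) :
    Set.Nonempty {k | ∃ z : List (Fin 2), z.Sublist x ∧ z.Sublist y ∧ z.length = k} :=
  ⟨0, [], List.nil_sublist x, List.nil_sublist y, rfl⟩

lemma le_lcsLen {x y z : List (Fin 2)} (hzx : z.Sublist x) (hzy : z.Sublist y) :
    z.length ≤ lcsLen x y :=
  le_csSup (lcsLen_bddAbove x y) ⟨z, hzx, hzy, rfl⟩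

lemma exists_lcs (x y : List (Fin 2)) :
    ∃ z : List (Fin 2), z.Sublist x ∧ z.Sublist y ∧ z.length = lcsLen x y :=
  Nat.sSup_mem (lcsLen_nonempty x y) (lcsLen_bddAbove x y)

lemma sublist_eq_eraseIdx {z l : List (Fin 2)} (h : z.Sublist l) (hl : z.length + 1 = l.length) :
    ∃ i < l.length, z = l.eraseIdx i := by
  induction h with
  | slnil => simp at hl
  | @cons z' l' a h ih =>
    have hzl : z'.length = l'.length := by simpa using hl
    exact ⟨0, by simp, by simpa using (h.eq_of_length hzl)⟩
  | @cons_cons z' l' a h ih =>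
    obtain ⟨i, hi, hz⟩ := ih (by simpa using hl)
    exact ⟨i + 1, by simpa using hi, by simp [hz]⟩

/-- Ball membership in terms of single erase. -/
lemma mem_fllBall_iff (hn : 0 < n) (x y : Fin n → Fin 2) :
    y ∈ fllBall 2 n 1 x ↔ y = x ∨
      ∃ p q, p < n ∧ q < n ∧ (List.ofFn x).eraseIdx p = (List.ofFn y).eraseIdx q := by
  have hlx : (List.ofFn x).length = n := by simp
  have hly : (List.ofFn y).length = n := by simp
  rw [fllBall, Finset.mem_filter]
  simp only [Finset.mem_univ, true_and]
  constructor
  · intro h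
    rw [fllDist] at h
    obtain ⟨z, hzx, hzy, hzl⟩ := exists_lcs (List.ofFn x) (List.ofFn y)
    have hzn : z.length ≤ n := hlx ▸ hzx.length_le
    have hge : n ≤ z.length + 1 := by omega
    rcases Nat.lt_or_ge z.length n with hlt | hge2
    · have h1 : z.length + 1 = (List.ofFn x).length := by omega
      have h2 : z.length + 1 = (List.ofFn y).length := by omega
      obtain ⟨p, hp, hzp⟩ := sublist_eq_eraseIdx hzx h1
      obtain ⟨q, hq, hzq⟩ := sublist_eq_eraseIdx hzy h2
      exact Or.inr ⟨p, q, by omega, by omega, by rw [← hzp, ← hzq]⟩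
    · have h1 : z = List.ofFn x := hzx.eq_of_length (by omega)
      have h2 : z = List.ofFn y := hzy.eq_of_length (by omega)
      exact Or.inl (List.ofFn_inj.mp (h1.symm.trans h2)).symm
  · intro h
    rcases h with rfl | ⟨p, q, hp, hq, he⟩
    · have h1 : n ≤ lcsLen (List.ofFn y) (List.ofFn y) := by
        have := le_lcsLen (List.Sublist.refl (List.ofFn y)) (List.Sublist.refl (List.ofFn y))
        simpa using this
      rw [fllDist]; omega
    · have hsub : ((List.ofFn x).eraseIdx p).Sublist (List.ofFn x) := List.eraseIdx_sublist _ _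
      have hsub2 : ((List.ofFn x).eraseIdx p).Sublist (List.ofFn y) := by
        rw [he]; exact List.eraseIdx_sublist _ _
      have hlen : ((List.ofFn x).eraseIdx p).length = n - 1 := by
        rw [List.length_eraseIdx]; simp [hlx, hp]
      have := le_lcsLen hsub hsub2
      rw [fllDist]; omega

end Aux

section Aux2

variable {n : ℕ}

lemma fin2_flip {a b : Fin 2} (h : a ≠ b) : a = b + 1 := by
  fin_cases a <;> fin_cases b <;> simp_all

lemma fin2_flip_ne (a : Fin 2) : a + 1 ≠ a := by fin_cases a <;> simp

lemma fin2_eq_of_ne {a b c : Fin 2} (h1 : a ≠ b) (h2 : c ≠ b) : a = c := by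
  fin_cases a <;> fin_cases b <;> fin_cases c <;> simp_all

/-- The alternation set of a word. -/
def Sset (n : ℕ) (x : Fin n → Fin 2) : Finset ℕ :=
  (Finset.range (n - 1)).filter fun k => XF n x k ≠ XF n x (k + 1)

lemma mem_Sset {x : Fin n → Fin 2} {k : ℕ} :
    k ∈ Sset n x ↔ k < n - 1 ∧ XF n x k ≠ XF n x (k + 1) := by
  simp [Sset]

/-- Left-shift generator: delete at `p`, insert flipped at `q`, `p ≤ q`. -/
def g1 (n : ℕ) (x : Fin n → Fin 2) (p q : ℕ) : Fin n → Fin 2 := fun k =>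
  if p ≤ (k : ℕ) ∧ (k : ℕ) < q then XF n x (k + 1)
  else if (k : ℕ) = q then XF n x k + 1 else x k

/-- Right-shift generator: insert flipped at `q`, delete at `p`, `q ≤ p`. -/
def g2 (n : ℕ) (x : Fin n → Fin 2) (q p : ℕ) : Fin n → Fin 2 := fun k =>
  if q < (k : ℕ) ∧ (k : ℕ) ≤ p then XF n x (k - 1)
  else if (k : ℕ) = q then XF n x k + 1 else x k

lemma eraseIdx_ofFn (x : Fin n → Fin 2) {p : ℕ} (hp : p < n) :
    (List.ofFn x).eraseIdx p =
      List.ofFn (fun k : Fin (n - 1) => if (k : ℕ) < p then XF n x k else XF n x (k + 1)) := by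
  have hlx : (List.ofFn x).length = n := by simp
  apply List.ext_getElem (by rw [List.length_eraseIdx, hlx, if_pos hp]; simp)
  intro k h1 h2
  have hk : k < n - 1 := by simpa using h2
  rw [List.getElem_ofFn]
  simp only [Fin.val_mk]
  rcases Nat.lt_or_ge k p with h3 | h3
  · rw [List.getElem_eraseIdx_of_lt h1 h3, ofFn_getElem, if_pos h3]
  · rw [List.getElem_eraseIdx_of_ge h1 h3, ofFn_getElem, if_neg (by omega)]

lemma erase_eq_iff (x y : Fin n → Fin 2) {p q : ℕ} (hpq : p ≤ q) (hq : q < n) :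
    (List.ofFn x).eraseIdx p = (List.ofFn y).eraseIdx q ↔
      (∀ k, k < p → XF n y k = XF n x k) ∧
      (∀ k, p ≤ k → k < q → XF n y k = XF n x (k + 1)) ∧
      (∀ k, q < k → k < n → XF n y k = XF n x k) := by
  rw [eraseIdx_ofFn x (by omega), eraseIdx_ofFn y hq, List.ofFn_inj]
  rw [funext_iff]
  constructor
  · intro h
    refine ⟨fun k hk => ?_, fun k hk1 hk2 => ?_, fun k hk1 hk2 => ?_⟩
    · have := h ⟨k, by omega⟩
      simp only [if_pos hk, if_pos (show k < q by omega)] at this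
      exact this.symm
    · have := h ⟨k, by omega⟩
      simp only [if_neg (show ¬ k < p by omega), if_pos hk2] at this
      exact this.symm
    · have := h ⟨k - 1, by omega⟩
      simp only [if_neg (show ¬ k - 1 < p by omega), if_neg (show ¬ k - 1 < q by omega)] at this
      have hk' : k - 1 + 1 = k := by omega
      rw [hk'] at this
      exact this.symm
  · rintro ⟨A, B, C⟩ k
    rcases Nat.lt_or_ge (k : ℕ) p with h3 | h3
    · rw [if_pos h3, if_pos (show (k : ℕ) < q by omega)]
      exact (A k h3).symm
    · rw [if_neg (by omega)]
      rcases Nat.lt_or_ge (k : ℕ) q with h4 | h4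
      · rw [if_pos h4]
        exact (B k h3 h4).symm
      · rw [if_neg (by omega)]
        have hkn : (k : ℕ) < n - 1 := k.2
        exact (C ((k : ℕ) + 1) (by omega) (by omega)).symm

end Aux2

section Aux3

variable {n : ℕ}

lemma XF_g1 (x : Fin n → Fin 2) {p q k : ℕ} (hk : k < n) :
    XF n (g1 n x p q) k =
      if p ≤ k ∧ k < q then XF n x (k + 1)
      else if k = q then XF n x k + 1 else XF n x k := by
  rw [XF_lt _ hk]
  show (if p ≤ ((⟨k, hk⟩ : Fin n) : ℕ) ∧ ((⟨k, hk⟩ : Fin n) : ℕ) < q then _ else _) = _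
  simp only [Fin.val_mk]
  split_ifs <;> first | rfl | rw [XF_lt _ hk]

lemma XF_g2 (x : Fin n → Fin 2) {p q k : ℕ} (hk : k < n) :
    XF n (g2 n x q p) k =
      if q < k ∧ k ≤ p then XF n x (k - 1)
      else if k = q then XF n x k + 1 else XF n x k := by
  rw [XF_lt _ hk]
  show (if q < ((⟨k, hk⟩ : Fin n) : ℕ) ∧ ((⟨k, hk⟩ : Fin n) : ℕ) ≤ p then _ else _) = _
  simp only [Fin.val_mk]
  split_ifs <;> first | rfl | rw [XF_lt _ hk]

lemma eq_of_XF_eq {x y : Fin n → Fin 2} (h : ∀ k, k < n → XF n y k = XF n x k) : y = x := by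
  funext k
  have := h k k.2
  rwa [XF_lt y k.2, XF_lt x k.2] at this

/-- Main membership characterization of the FLL 1-ball. -/
theorem mem_ball_gen (x y : Fin n → Fin 2) (hn : 0 < n) :
    y ∈ fllBall 2 n 1 x ↔ y = x ∨
      (∃ p q, p ≤ q ∧ q < n ∧ y = g1 n x p q) ∨
      (∃ q p, q ≤ p ∧ p < n ∧ y = g2 n x q p) := by
  rw [mem_fllBall_iff hn]
  constructor
  · rintro (rfl | ⟨p, q, hp, hq, he⟩)
    · exact Or.inl rfl
    · set D : Finset ℕ := (Finset.range n).filter (fun k => XF n y k ≠ XF n x k) with hD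
      have hDmem : ∀ k, k ∈ D ↔ k < n ∧ XF n y k ≠ XF n x k := by
        intro k; simp [hD]
      rcases D.eq_empty_or_nonempty with hDe | hDne
      · refine Or.inl (eq_of_XF_eq fun k hk => ?_)
        by_contra hne
        exact Finset.notMem_empty k (hDe ▸ (hDmem k).mpr ⟨hk, hne⟩)
      rcases le_or_gt p q with hpq | hqp
      · -- left-shift case
        obtain ⟨A, B, C⟩ := (erase_eq_iff x y hpq hq).mp he
        set j := D.max' hDne with hj
        have hjD : j ∈ D := D.max'_mem hDne
        have hjn : j < n := ((hDmem j).mp hjD).1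
        have hjne : XF n y j ≠ XF n x j := ((hDmem j).mp hjD).2
        have hjq : j ≤ q := by
          by_contra hc
          exact hjne (C j (by omega) hjn)
        have hpj : p ≤ j := by
          by_contra hc
          exact hjne (A j (by omega))
        refine Or.inr (Or.inl ⟨p, j, hpj, hjn, eq_of_XF_eq fun k hk => ?_⟩)
        rw [XF_g1 x hk]
        split_ifs with h1 h2
        · exact B k h1.1 (by omega)
        · subst h2
          exact fin2_flip hjne
        · -- k < p or k > j
          rcases Nat.lt_or_ge k p with h3 | h3
          · exact A k h3
          · have hkj : j < k := by omega
            by_contra hc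
            have : k ∈ D := (hDmem k).mpr ⟨hk, hc⟩
            exact absurd (D.le_max' k this) (by omega)
      · -- right-shift case
        have hqp' : q ≤ p := by omega
        obtain ⟨A, B, C⟩ := (erase_eq_iff y x hqp' hp).mp he.symm
        set i := D.min' hDne with hi
        have hiD : i ∈ D := D.min'_mem hDne
        have hin : i < n := ((hDmem i).mp hiD).1
        have hine : XF n y i ≠ XF n x i := ((hDmem i).mp hiD).2
        have hqi : q ≤ i := by
          by_contra hc
          exact hine (A i (by omega)).symm
        have hip : i ≤ p := by
          by_contra hc
          exact hine (C i (by omega) hin).symm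
        refine Or.inr (Or.inr ⟨i, p, hip, hp, eq_of_XF_eq fun k hk => ?_⟩)
        rw [XF_g2 x hk]
        split_ifs with h1 h2
        · have := B (k - 1) (by omega) (by omega)
          have hk' : k - 1 + 1 = k := by omega
          rw [hk'] at this
          exact this.symm
        · subst h2
          exact fin2_flip hine
        · rcases Nat.lt_or_ge p k with h3 | h3
          · exact (C k h3 hk).symm
          · have hki : k < i := by omega
            by_contra hc
            have : k ∈ D := (hDmem k).mpr ⟨hk, hc⟩
            exact absurd (D.min'_le k this) (by omega)
  · rintro (rfl | ⟨p, q, hpq, hq, rfl⟩ | ⟨q, p, hqp, hp, rfl⟩)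
    · exact Or.inl rfl
    · refine Or.inr ⟨p, q, by omega, hq, ?_⟩
      rw [erase_eq_iff x _ hpq hq]
      refine ⟨fun k hk => ?_, fun k hk1 hk2 => ?_, fun k hk1 hk2 => ?_⟩
      · rw [XF_g1 x (by omega), if_neg (by omega), if_neg (by omega)]
      · rw [XF_g1 x (by omega), if_pos ⟨hk1, hk2⟩]
      · rw [XF_g1 x hk2, if_neg (by omega), if_neg (by omega)]
    · refine Or.inr ⟨p, q, hp, by omega, ?_⟩
      have := (erase_eq_iff (g2 n x q p) x hqp hp).mpr ?_
      · exact this.symm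
      refine ⟨fun k hk => ?_, fun k hk1 hk2 => ?_, fun k hk1 hk2 => ?_⟩
      · rw [XF_g2 x (by omega), if_neg (by omega), if_neg (by omega)]
      · rw [XF_g2 x (by omega), if_pos (by omega), Nat.add_sub_cancel]
      · rw [XF_g2 x hk2, if_neg (by omega), if_neg (by omega)]

lemma XF_g1_shift (x : Fin n → Fin 2) {p q k : ℕ} (hk : k < n) (h : p ≤ k ∧ k < q) :
    XF n (g1 n x p q) k = XF n x (k + 1) := by rw [XF_g1 x hk, if_pos h]

lemma XF_g1_at (x : Fin n → Fin 2) {p q : ℕ} (hq : q < n) :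
    XF n (g1 n x p q) q = XF n x q + 1 := by
  rw [XF_g1 x hq, if_neg (by omega), if_pos rfl]

lemma XF_g1_off (x : Fin n → Fin 2) {p q k : ℕ} (hk : k < n) (h1 : ¬(p ≤ k ∧ k < q))
    (h2 : k ≠ q) : XF n (g1 n x p q) k = XF n x k := by
  rw [XF_g1 x hk, if_neg h1, if_neg h2]

lemma XF_g2_shift (x : Fin n → Fin 2) {p q k : ℕ} (hk : k < n) (h : q < k ∧ k ≤ p) :
    XF n (g2 n x q p) k = XF n x (k - 1) := by rw [XF_g2 x hk, if_pos h]

lemma XF_g2_at (x : Fin n → Fin 2) {p q : ℕ} (hq : q < n) :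
    XF n (g2 n x q p) q = XF n x q + 1 := by
  rw [XF_g2 x hq, if_neg (by omega), if_pos rfl]

lemma XF_g2_off (x : Fin n → Fin 2) {p q k : ℕ} (hk : k < n) (h1 : ¬(q < k ∧ k ≤ p))
    (h2 : k ≠ q) : XF n (g2 n x q p) k = XF n x k := by
  rw [XF_g2 x hk, if_neg h1, if_neg h2]

end Aux3

section Aux4

variable {n : ℕ}

/-- Canonical parameters for `g1`. -/
def P1c (n : ℕ) (x : Fin n → Fin 2) : Finset (ℕ × ℕ) :=
  ((Finset.range n) ×ˢ (Finset.range n)).filter fun pq =>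
    pq.1 = pq.2 ∨ (pq.1 < pq.2 ∧ pq.1 ∈ Sset n x)

/-- Canonical parameters for `g2` (pairs `(q,p)`). -/
def P2c (n : ℕ) (x : Fin n → Fin 2) : Finset (ℕ × ℕ) :=
  ((Finset.range n) ×ˢ (Finset.range n)).filter fun qp =>
    qp.1 = qp.2 ∨ (qp.1 < qp.2 ∧ 1 ≤ qp.2 ∧ qp.2 - 1 ∈ Sset n x)

/-- Parameters generating the overlap. -/
def P12 (n : ℕ) (x : Fin n → Fin 2) : Finset (ℕ × ℕ) :=
  ((Finset.range n) ×ˢ (Finset.range n)).filter fun pq =>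
    pq.1 = pq.2 ∨ (pq.1 < pq.2 ∧ ∀ m, pq.1 ≤ m → m < pq.2 → m ∈ Sset n x)

lemma mem_P1c {x : Fin n → Fin 2} {p q : ℕ} :
    (p, q) ∈ P1c n x ↔ (p < n ∧ q < n) ∧ (p = q ∨ (p < q ∧ p ∈ Sset n x)) := by
  simp [P1c, Finset.mem_filter, Finset.mem_product]

lemma mem_P2c {x : Fin n → Fin 2} {q p : ℕ} :
    (q, p) ∈ P2c n x ↔ (q < n ∧ p < n) ∧ (q = p ∨ (q < p ∧ 1 ≤ p ∧ p - 1 ∈ Sset n x)) := by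
  simp [P2c, Finset.mem_filter, Finset.mem_product]

lemma mem_P12 {x : Fin n → Fin 2} {p q : ℕ} :
    (p, q) ∈ P12 n x ↔ (p < n ∧ q < n) ∧
      (p = q ∨ (p < q ∧ ∀ m, p ≤ m → m < q → m ∈ Sset n x)) := by
  simp [P12, Finset.mem_filter, Finset.mem_product]

lemma P12_subset {x : Fin n → Fin 2} : P12 n x ⊆ P1c n x := by
  rintro ⟨p, q⟩ h
  rw [mem_P12] at h
  rw [mem_P1c]
  refine ⟨h.1, ?_⟩
  rcases h.2 with h2 | ⟨h2, h3⟩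
  · exact Or.inl h2
  · exact Or.inr ⟨h2, h3 p le_rfl h2⟩

noncomputable def im1 (n : ℕ) (x : Fin n → Fin 2) : Finset (Fin n → Fin 2) :=
  (P1c n x).image fun pq => g1 n x pq.1 pq.2

noncomputable def im2 (n : ℕ) (x : Fin n → Fin 2) : Finset (Fin n → Fin 2) :=
  (P2c n x).image fun qp => g2 n x qp.1 qp.2

lemma g1_eq_of_no_S {x : Fin n → Fin 2} {p p' q : ℕ} (hpp : p ≤ p') (hq : q < n)
    (hS : ∀ m, p ≤ m → m < p' → m ∉ Sset n x) (hp'q : p' ≤ q) :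
    g1 n x p q = g1 n x p' q := by
  apply eq_of_XF_eq
  intro k hk
  rcases Nat.lt_or_ge k p with h1 | h1
  · rw [XF_g1_off x hk (by omega) (by omega), XF_g1_off x hk (by omega) (by omega)]
  rcases Nat.lt_or_ge k p' with h2 | h2
  · -- p ≤ k < p' : not in S
    have hkS := hS k h1 h2
    rw [mem_Sset] at hkS
    push_neg at hkS
    rw [XF_g1_shift x hk ⟨h1, by omega⟩, XF_g1_off x hk (by omega) (by omega)]
    exact (hkS (by omega)).symm
  rcases Nat.lt_or_ge k q with h3 | h3
  · rw [XF_g1_shift x hk ⟨h1, h3⟩, XF_g1_shift x hk ⟨h2, h3⟩]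
  rcases Nat.eq_or_lt_of_le h3 with h4 | h4
  · subst h4
    rw [XF_g1_at x hk, XF_g1_at x hk]
  · rw [XF_g1_off x hk (by omega) (by omega), XF_g1_off x hk (by omega) (by omega)]

lemma g2_eq_of_no_S {x : Fin n → Fin 2} {q p p' : ℕ} (hpp : p' ≤ p) (hp : p < n)
    (hS : ∀ m, p' ≤ m → m < p → m ∉ Sset n x) (hqp : q ≤ p') :
    g2 n x q p = g2 n x q p' := by
  apply eq_of_XF_eq
  intro k hk
  rcases Nat.lt_or_ge k q with h1 | h1
  · rw [XF_g2_off x hk (by omega) (by omega), XF_g2_off x hk (by omega) (by omega)]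
  rcases Nat.eq_or_lt_of_le h1 with h2 | h2
  · subst h2
    rw [XF_g2_at x hk, XF_g2_at x hk]
  rcases le_or_gt k p' with h3 | h3
  · rw [XF_g2_shift x hk ⟨h2, by omega⟩, XF_g2_shift x hk ⟨h2, h3⟩]
  rcases le_or_gt k p with h4 | h4
  · -- p' < k ≤ p : k - 1 not in S
    have hkS := hS (k - 1) (by omega) (by omega)
    rw [mem_Sset] at hkS
    push_neg at hkS
    rw [XF_g2_shift x hk ⟨h2, h4⟩, XF_g2_off x hk (by omega) (by omega)]
    have h5 := hkS (by omega)
    have h6 : k - 1 + 1 = k := by omega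
    rw [h6] at h5
    exact h5
  · rw [XF_g2_off x hk (by omega) (by omega), XF_g2_off x hk (by omega) (by omega)]

/-- The ball is `{x} ∪ im1 ∪ im2`. -/
lemma fllBall_eq_insert (x : Fin n → Fin 2) (hn : 0 < n) :
    fllBall 2 n 1 x = insert x (im1 n x ∪ im2 n x) := by
  ext y
  rw [Finset.mem_insert, Finset.mem_union, mem_ball_gen x y hn]
  constructor
  · rintro (rfl | ⟨p, q, hpq, hq, rfl⟩ | ⟨q, p, hqp, hp, rfl⟩)
    · exact Or.inl rfl
    · refine Or.inr (Or.inl ?_)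
      rw [im1, Finset.mem_image]
      set T := (Sset n x).filter (fun m => p ≤ m ∧ m < q) with hT
      rcases T.eq_empty_or_nonempty with hTe | hTne
      · refine ⟨(q, q), ?_, ?_⟩
        · rw [mem_P1c]; exact ⟨⟨hq, hq⟩, Or.inl rfl⟩
        · refine (g1_eq_of_no_S hpq hq (fun m h1 h2 hm => ?_) le_rfl).symm
          exact Finset.notMem_empty m (hTe ▸ (Finset.mem_filter.mpr ⟨hm, h1, h2⟩))
      · set p' := T.min' hTne with hp'
        have hp'T : p' ∈ T := T.min'_mem hTne
        rw [hT, Finset.mem_filter] at hp'T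
        refine ⟨(p', q), ?_, ?_⟩
        · rw [mem_P1c]
          exact ⟨⟨by omega, hq⟩, Or.inr ⟨hp'T.2.2, hp'T.1⟩⟩
        · refine (g1_eq_of_no_S hp'T.2.1 hq (fun m h1 h2 hm => ?_) (by omega)).symm
          have : m ∈ T := Finset.mem_filter.mpr ⟨hm, h1, by omega⟩
          exact absurd (T.min'_le m this) (by omega)
    · refine Or.inr (Or.inr ?_)
      rw [im2, Finset.mem_image]
      set T := (Sset n x).filter (fun m => q ≤ m ∧ m < p) with hT
      rcases T.eq_empty_or_nonempty with hTe | hTne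
      · refine ⟨(q, q), ?_, ?_⟩
        · rw [mem_P2c]; exact ⟨⟨by omega, by omega⟩, Or.inl rfl⟩
        · refine (g2_eq_of_no_S hqp hp (fun m h1 h2 hm => ?_) le_rfl).symm
          exact Finset.notMem_empty m (hTe ▸ (Finset.mem_filter.mpr ⟨hm, h1, h2⟩))
      · set m0 := T.max' hTne with hm0
        have hm0T : m0 ∈ T := T.max'_mem hTne
        rw [hT, Finset.mem_filter] at hm0T
        have hm0n : m0 < n - 1 := (mem_Sset.mp hm0T.1).1
        refine ⟨(q, m0 + 1), ?_, ?_⟩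
        · rw [mem_P2c]
          exact ⟨⟨by omega, by omega⟩, Or.inr ⟨by omega, by omega, by simpa using hm0T.1⟩⟩
        · refine (g2_eq_of_no_S (by omega) hp (fun m h1 h2 hm => ?_) (by omega)).symm
          have : m ∈ T := Finset.mem_filter.mpr ⟨hm, by omega, h2⟩
          exact absurd (T.le_max' m this) (by omega)
  · rintro (rfl | hy | hy)
    · exact Or.inl rfl
    · rw [im1, Finset.mem_image] at hy
      obtain ⟨⟨p, q⟩, hpq, rfl⟩ := hy
      rw [mem_P1c] at hpq
      exact Or.inr (Or.inl ⟨p, q, by rcases hpq.2 with h | h <;> omega, hpq.1.2, rfl⟩)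
    · rw [im2, Finset.mem_image] at hy
      obtain ⟨⟨q, p⟩, hqp, rfl⟩ := hy
      rw [mem_P2c] at hqp
      exact Or.inr (Or.inr ⟨q, p, by rcases hqp.2 with h | h <;> omega, hqp.1.2, rfl⟩)

lemma x_not_mem_im1 (x : Fin n → Fin 2) : x ∉ im1 n x := by
  rw [im1, Finset.mem_image]
  rintro ⟨⟨p, q⟩, hpq, he⟩
  rw [mem_P1c] at hpq
  have hq : q < n := hpq.1.2
  have := congrArg (fun z => XF n z q) he
  simp only at this
  rw [XF_g1 x hq, if_neg (by omega), if_pos rfl] at this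
  exact fin2_flip_ne _ this

lemma x_not_mem_im2 (x : Fin n → Fin 2) : x ∉ im2 n x := by
  rw [im2, Finset.mem_image]
  rintro ⟨⟨q, p⟩, hqp, he⟩
  rw [mem_P2c] at hqp
  have hq : q < n := hqp.1.1
  have := congrArg (fun z => XF n z q) he
  simp only at this
  rw [XF_g2 x hq, if_neg (by omega), if_pos rfl] at this
  exact fin2_flip_ne _ this

lemma g1_injOn (x : Fin n → Fin 2) : Set.InjOn (fun pq : ℕ × ℕ => g1 n x pq.1 pq.2) (P1c n x) := by
  rintro ⟨p, q⟩ hpq ⟨p', q'⟩ hpq' he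
  simp only at he
  rw [Finset.mem_coe, mem_P1c] at hpq hpq'
  have hq : q < n := hpq.1.2
  have hq' : q' < n := hpq'.1.2
  have hXF : ∀ k, k < n → XF n (g1 n x p q) k = XF n (g1 n x p' q') k := fun k hk => by rw [he]
  -- q = q'
  have hqq : q = q' := by
    by_contra hne
    rcases Nat.lt_or_ge q q' with h | h
    · have := hXF q' hq'
      rw [XF_g1 x hq', if_neg (by omega), if_neg (by omega),
        XF_g1 x hq', if_neg (by omega), if_pos rfl] at this
      exact fin2_flip_ne _ this.symm
    · have hlt : q' < q := by omega
      have := hXF q hq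
      rw [XF_g1 x hq, if_neg (by omega), if_pos rfl,
        XF_g1 x hq, if_neg (by omega), if_neg (by omega)] at this
      exact fin2_flip_ne _ this
  subst hqq
  have hpp : p = p' := by
    by_contra hne
    rcases Nat.lt_or_ge p p' with h | h
    · -- p < p' ≤ q, so p < q hence p ∈ S
      have hp'q : p' ≤ q := by rcases hpq'.2 with h2 | h2 <;> omega
      have hpS : p ∈ Sset n x := by
        rcases hpq.2 with h2 | h2
        · omega
        · exact h2.2
      have := hXF p (by omega)
      rw [XF_g1 x (by omega), if_pos ⟨le_rfl, by omega⟩,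
        XF_g1 x (by omega), if_neg (by omega), if_neg (by omega)] at this
      exact (mem_Sset.mp hpS).2 this.symm
    · have hlt : p' < p := by omega
      have hp'q : p ≤ q := by rcases hpq.2 with h2 | h2 <;> omega
      have hpS : p' ∈ Sset n x := by
        rcases hpq'.2 with h2 | h2
        · omega
        · exact h2.2
      have := hXF p' (by omega)
      rw [XF_g1 x (by omega), if_neg (by omega), if_neg (by omega),
        XF_g1 x (by omega), if_pos ⟨le_rfl, by omega⟩] at this
      exact (mem_Sset.mp hpS).2 this
  rw [hpp]

lemma g2_injOn (x : Fin n → Fin 2) : Set.InjOn (fun qp : ℕ × ℕ => g2 n x qp.1 qp.2) (P2c n x) := by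
  rintro ⟨q, p⟩ hqp ⟨q', p'⟩ hqp' he
  simp only at he
  rw [Finset.mem_coe, mem_P2c] at hqp hqp'
  have hp : p < n := hqp.1.2
  have hp' : p' < n := hqp'.1.2
  have hXF : ∀ k, k < n → XF n (g2 n x q p) k = XF n (g2 n x q' p') k := fun k hk => by rw [he]
  have hqq : q = q' := by
    by_contra hne
    rcases Nat.lt_or_ge q q' with h | h
    · have := hXF q (by omega)
      rw [XF_g2 x (by omega), if_neg (by omega), if_pos rfl,
        XF_g2 x (by omega), if_neg (by omega), if_neg (by omega)] at this
      exact fin2_flip_ne _ this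
    · have := hXF q' (by omega)
      rw [XF_g2 x (by omega), if_neg (by omega), if_neg (by omega),
        XF_g2 x (by omega), if_neg (by omega), if_pos rfl] at this
      exact fin2_flip_ne _ this.symm
  subst hqq
  have hpp : p = p' := by
    by_contra hne
    rcases Nat.lt_or_ge p p' with h | h
    · -- p < p', so q < p' and p' - 1 ∈ S
      have hS : p' - 1 ∈ Sset n x := by
        rcases hqp'.2 with h2 | h2
        · omega
        · exact h2.2.2
      have hqp'2 : q < p' := by rcases hqp'.2 with h2 | h2 <;> omega
      have := hXF p' hp'
      rw [XF_g2 x hp', if_neg (by omega), if_neg (by omega),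
        XF_g2 x hp', if_pos ⟨hqp'2, le_rfl⟩] at this
      have hS2 := (mem_Sset.mp hS).2
      have h4 : p' - 1 + 1 = p' := by omega
      rw [h4] at hS2
      exact hS2 this.symm
    · have hlt : p' < p := by omega
      have hS : p - 1 ∈ Sset n x := by
        rcases hqp.2 with h2 | h2
        · omega
        · exact h2.2.2
      have hqp2 : q < p := by rcases hqp.2 with h2 | h2 <;> omega
      have := hXF p hp
      rw [XF_g2 x hp, if_pos ⟨hqp2, le_rfl⟩,
        XF_g2 x hp, if_neg (by omega), if_neg (by omega)] at this
      have hS2 := (mem_Sset.mp hS).2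
      have h4 : p - 1 + 1 = p := by omega
      rw [h4] at hS2
      exact hS2 this
  rw [hpp]

end Aux4

section Aux5

variable {n : ℕ}

lemma g1_diag_eq_g2 (x : Fin n → Fin 2) (q : ℕ) : g1 n x q q = g2 n x q q := by
  apply eq_of_XF_eq
  intro k hk
  rcases eq_or_ne k q with rfl | hkq
  · rw [XF_g1_at x hk, XF_g2_at x hk]
  · rw [XF_g1_off x hk (by omega) hkq, XF_g2_off x hk (by omega) hkq]

lemma g1_alt_eq_g2 (x : Fin n → Fin 2) {p q : ℕ} (hpq : p < q) (hq : q < n)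
    (halt : ∀ m, p ≤ m → m < q → m ∈ Sset n x) : g1 n x p q = g2 n x p q := by
  apply eq_of_XF_eq
  intro k hk
  rcases Nat.lt_or_ge k p with h1 | h1
  · rw [XF_g1_off x hk (by omega) (by omega), XF_g2_off x hk (by omega) (by omega)]
  rcases Nat.eq_or_lt_of_le h1 with h2 | h2
  · subst h2
    rw [XF_g1_shift x hk ⟨le_rfl, hpq⟩, XF_g2_at x hk]
    exact fin2_flip (Ne.symm (mem_Sset.mp (halt p le_rfl hpq)).2)
  rcases Nat.lt_or_ge k q with h3 | h3
  · rw [XF_g1_shift x hk ⟨by omega, h3⟩, XF_g2_shift x hk ⟨h2, by omega⟩]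
    have hkS := (mem_Sset.mp (halt k (by omega) h3)).2
    have hkS' := (mem_Sset.mp (halt (k - 1) (by omega) (by omega))).2
    have h4 : k - 1 + 1 = k := by omega
    rw [h4] at hkS'
    exact fin2_eq_of_ne (fun h => hkS h.symm) hkS'
  rcases Nat.eq_or_lt_of_le h3 with h4 | h4
  · subst h4
    rw [XF_g1_at x hk, XF_g2_shift x hk ⟨hpq, le_rfl⟩]
    have hkS' := (mem_Sset.mp (halt (q - 1) (by omega) (by omega))).2
    have h5 : q - 1 + 1 = q := by omega
    rw [h5] at hkS'
    exact (fin2_flip hkS').symm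
  · rw [XF_g1_off x hk (by omega) (by omega), XF_g2_off x hk (by omega) (by omega)]

lemma im_inter (x : Fin n → Fin 2) :
    im1 n x ∩ im2 n x = (P12 n x).image fun pq => g1 n x pq.1 pq.2 := by
  ext y
  rw [Finset.mem_inter, Finset.mem_image]
  constructor
  · rintro ⟨h1, h2⟩
    rw [im1, Finset.mem_image] at h1
    obtain ⟨⟨p, q⟩, hpq, rfl⟩ := h1
    rw [im2, Finset.mem_image] at h2
    obtain ⟨⟨q', p'⟩, hq'p', he⟩ := h2
    rw [mem_P1c] at hpq
    rw [mem_P2c] at hq'p'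
    obtain ⟨⟨hpn, hqn⟩, hc⟩ := hpq
    obtain ⟨⟨hq'n, hp'n⟩, hc'⟩ := hq'p'
    rcases hc with heq | ⟨hpq2, hpS⟩
    · exact ⟨(p, q), mem_P12.mpr ⟨⟨hpn, hqn⟩, Or.inl heq⟩, rfl⟩
    -- p < q, p ∈ S
    have hq'p'2 : q' ≤ p' := by rcases hc' with h | h <;> omega
    have hXF : ∀ k, k < n → XF n (g1 n x p q) k = XF n (g2 n x q' p') k :=
      fun k hk => by rw [he]
    have hq'p : q' = p := by
      by_contra hne
      rcases Nat.lt_or_ge q' p with h | h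
      · have h1 := hXF q' hq'n
        rw [XF_g1_off x hq'n (by omega) (by omega), XF_g2_at x hq'n] at h1
        exact fin2_flip_ne _ h1.symm
      · have hlt : p < q' := by omega
        have h1 := hXF p hpn
        rw [XF_g1_shift x hpn ⟨le_rfl, hpq2⟩, XF_g2_off x hpn (by omega) (by omega)] at h1
        exact (mem_Sset.mp hpS).2 h1.symm
    rw [hq'p] at hXF
    have hqp' : q ≤ p' := by
      by_contra hne
      have h1 := hXF q hqn
      rw [XF_g1_at x hqn, XF_g2_off x hqn (by omega) (by omega)] at h1
      exact fin2_flip_ne _ h1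
    have key : ∀ m, p ≤ m → m < q → m ∈ Sset n x := by
      intro m hm
      induction m, hm using Nat.le_induction with
      | base => intro _; exact hpS
      | succ m hm ih =>
        intro hmq
        have hmS := ih (by omega)
        have hmn : m + 1 < n := by omega
        have h1 := hXF (m + 1) hmn
        rw [XF_g1_shift x hmn ⟨by omega, hmq⟩, XF_g2_shift x hmn ⟨by omega, by omega⟩] at h1
        simp only [Nat.add_sub_cancel] at h1
        have hmS2 := (mem_Sset.mp hmS).2
        rw [mem_Sset]
        refine ⟨by omega, fun hc => ?_⟩
        rw [← hc] at h1
        exact hmS2 h1.symm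
    exact ⟨(p, q), mem_P12.mpr ⟨⟨hpn, hqn⟩, Or.inr ⟨hpq2, key⟩⟩, rfl⟩
  · rintro ⟨⟨p, q⟩, hpq, rfl⟩
    have hpq' := hpq
    rw [mem_P12] at hpq'
    obtain ⟨⟨hpn, hqn⟩, hc⟩ := hpq'
    constructor
    · rw [im1, Finset.mem_image]
      exact ⟨(p, q), P12_subset hpq, rfl⟩
    · rw [im2, Finset.mem_image]
      rcases hc with heq | ⟨hpq2, halt⟩
      · subst heq
        exact ⟨(p, p), mem_P2c.mpr ⟨⟨hpn, hpn⟩, Or.inl rfl⟩, (g1_diag_eq_g2 x p).symm⟩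
      · refine ⟨(p, q), mem_P2c.mpr ⟨⟨hpn, hqn⟩, Or.inr ⟨hpq2, by omega, ?_⟩⟩,
          (g1_alt_eq_g2 x hpq2 hqn halt).symm⟩
        have := halt (q - 1) (by omega) (by omega)
        simpa using this

/-- The overlap pairs. -/
def PairsF (n : ℕ) (x : Fin n → Fin 2) : Finset (ℕ × ℕ) :=
  ((Finset.range n) ×ˢ (Finset.range n)).filter fun pq =>
    pq.1 < pq.2 ∧ ∀ m, pq.1 ≤ m → m < pq.2 → m ∈ Sset n x

lemma mem_PairsF {x : Fin n → Fin 2} {p q : ℕ} :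
    (p, q) ∈ PairsF n x ↔ (p < n ∧ q < n) ∧ p < q ∧ ∀ m, p ≤ m → m < q → m ∈ Sset n x := by
  simp [PairsF, Finset.mem_filter, Finset.mem_product]

lemma card_P12 (x : Fin n → Fin 2) : (P12 n x).card = n + (PairsF n x).card := by
  have : P12 n x = ((Finset.range n).image fun q => (q, q)) ∪ PairsF n x := by
    ext ⟨p, q⟩
    rw [mem_P12, Finset.mem_union, Finset.mem_image, mem_PairsF]
    constructor
    · rintro ⟨⟨hpn, hqn⟩, hc | hc⟩
      · exact Or.inl ⟨p, Finset.mem_range.mpr hpn, by rw [hc]⟩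
      · exact Or.inr ⟨⟨hpn, hqn⟩, hc⟩
    · rintro (⟨r, hr, he⟩ | ⟨h1, h2⟩)
      · obtain ⟨he1, he2⟩ := Prod.mk.injEq .. ▸ he
        simp only [Finset.mem_range] at hr
        exact ⟨⟨by omega, by omega⟩, Or.inl (by omega)⟩
      · exact ⟨h1, Or.inr h2⟩
  rw [this, Finset.card_union_of_disjoint, Finset.card_image_of_injective]
  · simp
  · intro a b hab
    simpa using hab
  · rw [Finset.disjoint_left]
    rintro ⟨p, q⟩ h1 h2
    rw [Finset.mem_image] at h1
    obtain ⟨r, _, he⟩ := h1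
    obtain ⟨he1, he2⟩ := Prod.mk.injEq .. ▸ he
    rw [mem_PairsF] at h2
    omega

lemma card_inter (x : Fin n → Fin 2) :
    (im1 n x ∩ im2 n x).card = n + (PairsF n x).card := by
  rw [im_inter, ← card_P12]
  exact Finset.card_image_of_injOn ((g1_injOn x).mono (by exact_mod_cast P12_subset))

lemma card_P1c (x : Fin n → Fin 2) :
    (P1c n x).card = n + ∑ k ∈ Sset n x, (n - 1 - k) := by
  have hrw : P1c n x = (Finset.range n).biUnion fun q =>
      (insert q ((Sset n x).filter (· < q))).image fun p => (p, q) := by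
    ext ⟨p, q⟩
    rw [mem_P1c, Finset.mem_biUnion]
    constructor
    · rintro ⟨⟨hpn, hqn⟩, hc⟩
      refine ⟨q, Finset.mem_range.mpr hqn, Finset.mem_image.mpr ⟨p, ?_, rfl⟩⟩
      rcases hc with h | h
      · simp [h]
      · simp [Finset.mem_insert, Finset.mem_filter, h.1, h.2]
    · rintro ⟨r, hr, hmem⟩
      rw [Finset.mem_image] at hmem
      obtain ⟨p', hp', he⟩ := hmem
      obtain ⟨he1, he2⟩ := Prod.mk.injEq .. ▸ he
      subst he1; subst he2
      rw [Finset.mem_range] at hr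
      rw [Finset.mem_insert, Finset.mem_filter] at hp'
      rcases hp' with h | h
      · exact ⟨⟨by omega, hr⟩, Or.inl h⟩
      · exact ⟨⟨by omega, hr⟩, Or.inr ⟨h.2, h.1⟩⟩
  rw [hrw, Finset.card_biUnion]
  · have : ∀ q ∈ Finset.range n,
        ((insert q ((Sset n x).filter (· < q))).image fun p => (p, q)).card =
        1 + ((Sset n x).filter (· < q)).card := by
      intro q hq
      rw [Finset.card_image_of_injective _ (fun a b hab => by simpa using hab),
        Finset.card_insert_of_notMem (by simp)]
      omega
    rw [Finset.sum_congr rfl this, Finset.sum_add_distrib]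
    simp only [Finset.sum_const, Finset.card_range, smul_eq_mul, mul_one]
    congr 1
    have : ∀ q ∈ Finset.range n, ((Sset n x).filter (· < q)).card =
        ∑ k ∈ Sset n x, if k < q then 1 else 0 := by
      intro q hq
      rw [Finset.card_filter]
    rw [Finset.sum_congr rfl this, Finset.sum_comm]
    apply Finset.sum_congr rfl
    intro k hk
    have hkn : k < n - 1 := (mem_Sset.mp hk).1
    have : ∑ q ∈ Finset.range n, (if k < q then 1 else 0) =
        ((Finset.range n).filter fun q => k < q).card := by
      rw [Finset.card_filter]
    rw [this]
    have : ((Finset.range n).filter fun q => k < q) = Finset.Ico (k + 1) n := by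
      ext m; simp [Finset.mem_filter, Finset.mem_range, Finset.mem_Ico]; omega
    rw [this, Nat.card_Ico]
    omega
  · rintro a ha b hb hab
    rw [Function.onFun_apply, Finset.disjoint_left]
    rintro ⟨p, q⟩ h1 h2
    rw [Finset.mem_image] at h1 h2
    obtain ⟨p1, _, he1⟩ := h1
    obtain ⟨p2, _, he2⟩ := h2
    apply hab
    have := (Prod.mk.injEq .. ▸ he1).2
    have := (Prod.mk.injEq .. ▸ he2).2
    omega

lemma card_P2c (x : Fin n → Fin 2) :
    (P2c n x).card = n + ∑ k ∈ Sset n x, (k + 1) := by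
  have hrw : P2c n x = (Finset.range n).biUnion fun q =>
      (insert q (((Sset n x).filter (fun m => q ≤ m)).image (· + 1))).image fun p => (q, p) := by
    ext ⟨q, p⟩
    rw [mem_P2c, Finset.mem_biUnion]
    constructor
    · rintro ⟨⟨hqn, hpn⟩, hc⟩
      refine ⟨q, Finset.mem_range.mpr hqn, Finset.mem_image.mpr ⟨p, ?_, rfl⟩⟩
      rcases hc with h | h
      · simp [h]
      · rw [Finset.mem_insert, Finset.mem_image]
        refine Or.inr ⟨p - 1, Finset.mem_filter.mpr ⟨h.2.2, by omega⟩, by omega⟩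
    · rintro ⟨r, hr, hmem⟩
      rw [Finset.mem_image] at hmem
      obtain ⟨p', hp', he⟩ := hmem
      obtain ⟨he1, he2⟩ := Prod.mk.injEq .. ▸ he
      subst he1; subst he2
      rw [Finset.mem_range] at hr
      rw [Finset.mem_insert, Finset.mem_image] at hp'
      rcases hp' with h | ⟨m, hm, he3⟩
      · exact ⟨⟨hr, by omega⟩, Or.inl h.symm⟩
      · rw [Finset.mem_filter] at hm
        have hmn : m < n - 1 := (mem_Sset.mp hm.1).1
        refine ⟨⟨hr, by omega⟩, Or.inr ⟨by omega, by omega, ?_⟩⟩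
        have : p' - 1 = m := by omega
        rw [this]; exact hm.1
  rw [hrw, Finset.card_biUnion]
  · have : ∀ q ∈ Finset.range n,
        ((insert q (((Sset n x).filter (fun m => q ≤ m)).image (· + 1))).image
          fun p => (q, p)).card = 1 + ((Sset n x).filter (fun m => q ≤ m)).card := by
      intro q hq
      rw [Finset.card_image_of_injective _ (fun a b hab => by simpa using hab),
        Finset.card_insert_of_notMem ?f1,
        Finset.card_image_of_injective _ (fun a b hab => by simpa using hab)]
      · omega
      case f1 =>
        rw [Finset.mem_image]
        rintro ⟨m, hm, he⟩
        rw [Finset.mem_filter] at hm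
        omega
    rw [Finset.sum_congr rfl this, Finset.sum_add_distrib]
    simp only [Finset.sum_const, Finset.card_range, smul_eq_mul, mul_one]
    congr 1
    have : ∀ q ∈ Finset.range n, ((Sset n x).filter (fun m => q ≤ m)).card =
        ∑ k ∈ Sset n x, if q ≤ k then 1 else 0 := by
      intro q hq
      rw [Finset.card_filter]
    rw [Finset.sum_congr rfl this, Finset.sum_comm]
    apply Finset.sum_congr rfl
    intro k hk
    have hkn : k < n - 1 := (mem_Sset.mp hk).1
    have h1 : ∑ q ∈ Finset.range n, (if q ≤ k then 1 else 0) =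
        ((Finset.range n).filter fun q => q ≤ k).card := by
      rw [Finset.card_filter]
    rw [h1]
    have : ((Finset.range n).filter fun q => q ≤ k) = Finset.range (k + 1) := by
      ext m; simp [Finset.mem_filter, Finset.mem_range]; omega
    rw [this, Finset.card_range]
  · rintro a ha b hb hab
    rw [Function.onFun_apply, Finset.disjoint_left]
    rintro ⟨q, p⟩ h1 h2
    rw [Finset.mem_image] at h1 h2
    obtain ⟨p1, _, he1⟩ := h1
    obtain ⟨p2, _, he2⟩ := h2
    apply hab
    have := (Prod.mk.injEq .. ▸ he1).1
    have := (Prod.mk.injEq .. ▸ he2).1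
    omega

/-- Master counting identity for the FLL 1-ball. -/
theorem ball_card_eq (x : Fin n → Fin 2) (hn : 0 < n) :
    (fllBall 2 n 1 x).card + n + (PairsF n x).card =
      1 + 2 * n + (Sset n x).card * n := by
  have h1 : (fllBall 2 n 1 x).card = 1 + (im1 n x ∪ im2 n x).card := by
    rw [fllBall_eq_insert x hn, Finset.card_insert_of_notMem]
    · omega
    · rw [Finset.mem_union]
      rintro (h | h)
      · exact x_not_mem_im1 x h
      · exact x_not_mem_im2 x h
  have h2 : (im1 n x ∪ im2 n x).card + (im1 n x ∩ im2 n x).card =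
      (im1 n x).card + (im2 n x).card := Finset.card_union_add_card_inter _ _
  have h3 : (im1 n x).card = (P1c n x).card :=
    Finset.card_image_of_injOn (g1_injOn x)
  have h4 : (im2 n x).card = (P2c n x).card :=
    Finset.card_image_of_injOn (g2_injOn x)
  have h5 : (P1c n x).card + (P2c n x).card = 2 * n + (Sset n x).card * n := by
    rw [card_P1c, card_P2c]
    have : ∑ k ∈ Sset n x, (n - 1 - k) + ∑ k ∈ Sset n x, (k + 1) =
        ∑ k ∈ Sset n x, n := by
      rw [← Finset.sum_add_distrib]
      apply Finset.sum_congr rfl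
      intro k hk
      have := (mem_Sset.mp hk).1
      omega
    rw [Finset.sum_const, smul_eq_mul] at this
    omega
  have h6 := card_inter x
  omega

end Aux5

section Aux6

variable {n : ℕ}

lemma blockSeg_length (x : Fin n → Fin 2) {i j : ℕ} (hij : i ≤ j) (hj : j < n) :
    (blockSeg (List.ofFn x) i j).length = j + 1 - i := by
  rw [blockSeg, List.length_take, List.length_drop]
  simp only [List.length_ofFn]
  omega

lemma blockSeg_getElem (x : Fin n → Fin 2) {i j t : ℕ}
    (h : t < (blockSeg (List.ofFn x) i j).length) (hn : i + t < n) :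
    (blockSeg (List.ofFn x) i j)[t] = XF n x (i + t) := by
  simp only [blockSeg] at h ⊢
  rw [List.getElem_take, List.getElem_drop, ofFn_getElem]

/-- For binary lists, alternation is equivalent to all adjacent entries differing. -/
lemma isAltList_iff_adj {L : List (Fin 2)} :
    IsAltList L ↔ ∀ t, ∀ h : t + 1 < L.length, L.get ⟨t, by omega⟩ ≠ L.get ⟨t + 1, h⟩ := by
  constructor
  · exact fun h => h.1
  · intro h
    refine ⟨h, fun t ht => ?_⟩
    have h1 := h t (by omega)
    have h2 := h (t + 1) (by omega)
    exact fin2_eq_of_ne h1 (Ne.symm h2)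

lemma isAltList_iff_adj' {L : List (Fin 2)} :
    IsAltList L ↔ ∀ t, ∀ h : t + 1 < L.length, L[t]'(by omega) ≠ L[t + 1]'h := by
  rw [isAltList_iff_adj]
  simp only [List.get_eq_getElem]

lemma isAlt_block_iff (x : Fin n → Fin 2) {i j : ℕ} (hij : i ≤ j) (hj : j < n) :
    IsAltList (blockSeg (List.ofFn x) i j) ↔ ∀ m, i ≤ m → m < j → m ∈ Sset n x := by
  rw [isAltList_iff_adj']
  have hlen := blockSeg_length x hij hj
  constructor
  · intro h m hm1 hm2
    have ht : (m - i) + 1 < (blockSeg (List.ofFn x) i j).length := by omega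
    have := h (m - i) ht
    rw [blockSeg_getElem x (by omega) (by omega), blockSeg_getElem x (by omega) (by omega)] at this
    have e1 : i + (m - i) = m := by omega
    have e2 : i + (m - i + 1) = m + 1 := by omega
    rw [e1, e2] at this
    exact mem_Sset.mpr ⟨by omega, this⟩
  · intro h t ht
    rw [blockSeg_getElem x (by omega) (by omega), blockSeg_getElem x (by omega) (by omega)]
    have := (mem_Sset.mp (h (i + t) (by omega) (by omega))).2
    have e : i + (t + 1) = i + t + 1 := by omega
    rw [e]
    exact this

/-- Characterization of maximal alternating segments via the alternation set. -/
lemma mem_maxAltSegs_iff (x : Fin n → Fin 2) {i j : ℕ} :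
    (i, j) ∈ maxAltSegs (List.ofFn x) ↔
      i ≤ j ∧ j < n ∧ (∀ m, i ≤ m → m < j → m ∈ Sset n x) ∧
      (i = 0 ∨ (i - 1) ∉ Sset n x) ∧ (j = n - 1 ∨ j ∉ Sset n x) := by
  rw [maxAltSegs, Finset.mem_filter, Finset.mem_product]
  simp only [Finset.mem_range, List.length_ofFn]
  rw [IsMaxAltSeg]
  simp only [List.length_ofFn]
  constructor
  · rintro ⟨⟨hin, hjn⟩, hij, _, halt, hL, hR⟩
    have haS := (isAlt_block_iff x hij hjn).mp halt
    refine ⟨hij, hjn, haS, ?_, ?_⟩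
    · rcases hL with h | h
      · exact Or.inl h
      · right
        intro hc
        apply h
        rw [isAlt_block_iff x (by omega) hjn]
        intro m hm1 hm2
        rcases Nat.eq_or_lt_of_le hm1 with h2 | h2
        · rwa [h2] at hc
        · exact haS m (by omega) hm2
    · rcases hR with h | h
      · exact Or.inl h
      · rcases Nat.eq_or_lt_of_le (by omega : j + 1 ≤ n) with h2 | h2
        · exact Or.inl (by omega)
        · right
          intro hc
          apply h
          rw [isAlt_block_iff x (by omega) (by omega)]
          intro m hm1 hm2
          rcases Nat.lt_or_ge m j with h3 | h3
          · exact haS m hm1 h3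
          · have : m = j := by omega
            rwa [this]
  · rintro ⟨hij, hjn, haS, hL, hR⟩
    refine ⟨⟨by omega, hjn⟩, hij, by omega, (isAlt_block_iff x hij hjn).mpr haS, ?_, ?_⟩
    · rcases Nat.eq_zero_or_pos i with h0 | h0
      · exact Or.inl h0
      rcases hL with h | h
      · exact Or.inl h
      · right
        intro hc
        rw [isAlt_block_iff x (by omega) hjn] at hc
        exact h (hc (i - 1) le_rfl (by omega))
    · rcases Nat.eq_or_lt_of_le (by omega : j + 1 ≤ n) with h2 | h2
      · exact Or.inl (by omega)
      · rcases hR with h | h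
        · exact Or.inl h
        · right
          intro hc
          rw [isAlt_block_iff x (by omega) (by omega)] at hc
          exact h (hc j hij (by omega))

/-- Uniqueness of the left endpoint. -/
lemma seg_unique_left (x : Fin n → Fin 2) {i i' j : ℕ}
    (h1 : (i, j) ∈ maxAltSegs (List.ofFn x)) (h2 : (i', j) ∈ maxAltSegs (List.ofFn x)) :
    i = i' := by
  rw [mem_maxAltSegs_iff] at h1 h2
  by_contra hne
  rcases Nat.lt_or_ge i i' with h | h
  · have : i' - 1 ∈ Sset n x := h1.2.2.1 (i' - 1) (by omega) (by omega)
    rcases h2.2.2.2.1 with h3 | h3 <;> [omega; exact h3 this]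
  · have hlt : i' < i := by omega
    have : i - 1 ∈ Sset n x := h2.2.2.1 (i - 1) (by omega) (by omega)
    rcases h1.2.2.2.1 with h3 | h3 <;> [omega; exact h3 this]

/-- Every position is covered by a maximal alternating segment. -/
lemma seg_cover (x : Fin n → Fin 2) {k : ℕ} (hk : k < n) :
    ∃ i j, (i, j) ∈ maxAltSegs (List.ofFn x) ∧ i ≤ k ∧ k ≤ j := by
  set Tj := (Finset.range n).filter
    (fun m => k ≤ m ∧ (m = n - 1 ∨ m ∉ Sset n x)) with hTj
  have hTjne : Tj.Nonempty :=
    ⟨n - 1, Finset.mem_filter.mpr ⟨Finset.mem_range.mpr (by omega), by omega, Or.inl rfl⟩⟩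
  set j := Tj.min' hTjne with hj
  have hjT : j ∈ Tj := Tj.min'_mem hTjne
  rw [hTj, Finset.mem_filter, Finset.mem_range] at hjT
  have hcov : ∀ m, k ≤ m → m < j → m ∈ Sset n x := by
    intro m hm1 hm2
    by_contra hc
    have : m ∈ Tj :=
      Finset.mem_filter.mpr ⟨Finset.mem_range.mpr (by omega), hm1, Or.inr hc⟩
    exact absurd (Tj.min'_le m this) (by omega)
  set Ti := (Finset.range (j + 1)).filter
    (fun m => ∀ m', m ≤ m' → m' < j → m' ∈ Sset n x) with hTi
  have hkTi : k ∈ Ti :=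
    Finset.mem_filter.mpr ⟨Finset.mem_range.mpr (by omega), hcov⟩
  have hTine : Ti.Nonempty := ⟨k, hkTi⟩
  set i := Ti.min' hTine with hi
  have hiT : i ∈ Ti := Ti.min'_mem hTine
  rw [hTi, Finset.mem_filter, Finset.mem_range] at hiT
  have hik : i ≤ k := Ti.min'_le k hkTi
  refine ⟨i, j, ?_, hik, hjT.2.1⟩
  rw [mem_maxAltSegs_iff]
  refine ⟨by omega, by omega, hiT.2, ?_, hjT.2.2⟩
  rcases Nat.eq_zero_or_pos i with h0 | h0
  · exact Or.inl h0
  · right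
    intro hc
    have : i - 1 ∈ Ti := by
      refine Finset.mem_filter.mpr ⟨Finset.mem_range.mpr (by omega), fun m' hm1 hm2 => ?_⟩
      rcases Nat.eq_or_lt_of_le hm1 with h2 | h2
      · rwa [h2] at hc
      · exact hiT.2 m' (by omega) hm2
    exact absurd (Ti.min'_le _ this) (by omega)

/-- Uniqueness of the covering segment. -/
lemma seg_cover_unique (x : Fin n → Fin 2) {i j i' j' k : ℕ}
    (h1 : (i, j) ∈ maxAltSegs (List.ofFn x)) (h2 : (i', j') ∈ maxAltSegs (List.ofFn x))
    (hk1 : i ≤ k) (hk2 : k ≤ j) (hk1' : i' ≤ k) (hk2' : k ≤ j') : i = i' ∧ j = j' := by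
  have hjj : j = j' := by
    by_contra hne
    rcases Nat.lt_or_ge j j' with h | h
    · have hjS : j ∈ Sset n x := (mem_maxAltSegs_iff x).mp h2 |>.2.2.1 j (by omega) (by omega)
      have := (mem_maxAltSegs_iff x).mp h1
      rcases this.2.2.2.2 with h3 | h3
      · have := (mem_maxAltSegs_iff x).mp h2 |>.2.1
        omega
      · exact h3 hjS
    · have hlt : j' < j := by omega
      have hjS : j' ∈ Sset n x := (mem_maxAltSegs_iff x).mp h1 |>.2.2.1 j' (by omega) (by omega)
      have := (mem_maxAltSegs_iff x).mp h2
      rcases this.2.2.2.2 with h3 | h3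
      · have := (mem_maxAltSegs_iff x).mp h1 |>.2.1
        omega
      · exact h3 hjS
  subst hjj
  exact ⟨seg_unique_left x h1 h2, rfl⟩

end Aux6

section Aux7

variable {n : ℕ}

lemma segs_disjoint_Icc (x : Fin n → Fin 2) :
    ∀ p ∈ maxAltSegs (List.ofFn x), ∀ p' ∈ maxAltSegs (List.ofFn x), p ≠ p' →
      Disjoint (Finset.Icc p.1 p.2) (Finset.Icc p'.1 p'.2) := by
  rintro ⟨i, j⟩ h1 ⟨i', j'⟩ h2 hne
  rw [Finset.disjoint_left]
  intro k hk hk'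
  rw [Finset.mem_Icc] at hk hk'
  obtain ⟨e1, e2⟩ := seg_cover_unique x h1 h2 hk.1 hk.2 hk'.1 hk'.2
  exact hne (by rw [e1, e2])

lemma segs_biUnion_Icc (x : Fin n → Fin 2) :
    (maxAltSegs (List.ofFn x)).biUnion (fun p => Finset.Icc p.1 p.2) = Finset.range n := by
  ext k
  rw [Finset.mem_biUnion, Finset.mem_range]
  constructor
  · rintro ⟨⟨i, j⟩, hp, hk⟩
    rw [Finset.mem_Icc] at hk
    have := (mem_maxAltSegs_iff x).mp hp
    omega
  · intro hk
    obtain ⟨i, j, hp, h1, h2⟩ := seg_cover x hk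
    exact ⟨(i, j), hp, Finset.mem_Icc.mpr ⟨h1, h2⟩⟩

lemma sum_seg_len (x : Fin n → Fin 2) :
    ∑ p ∈ maxAltSegs (List.ofFn x), (p.2 + 1 - p.1) = n := by
  have h := segs_biUnion_Icc x
  have hc := Finset.card_biUnion (segs_disjoint_Icc x)
  rw [h, Finset.card_range] at hc
  have h4 : ∑ p ∈ maxAltSegs (List.ofFn x), (p.2 + 1 - p.1) =
      ∑ u ∈ maxAltSegs (List.ofFn x), (Finset.Icc u.1 u.2).card :=
    Finset.sum_congr rfl fun p _ => (Nat.card_Icc _ _).symm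
  omega

lemma Sset_eq_biUnion (x : Fin n → Fin 2) :
    Sset n x = (maxAltSegs (List.ofFn x)).biUnion (fun p => Finset.Ico p.1 p.2) := by
  ext k
  rw [Finset.mem_biUnion]
  constructor
  · intro hk
    have hkn : k < n - 1 := (mem_Sset.mp hk).1
    obtain ⟨i, j, hp, h1, h2⟩ := seg_cover x (show k < n by omega)
    refine ⟨(i, j), hp, Finset.mem_Ico.mpr ⟨h1, ?_⟩⟩
    rcases Nat.eq_or_lt_of_le h2 with h3 | h3
    · exfalso
      have := (mem_maxAltSegs_iff x).mp hp
      rcases this.2.2.2.2 with h4 | h4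
      · omega
      · rw [h3] at hk
        exact h4 hk
    · exact h3
  · rintro ⟨⟨i, j⟩, hp, hk⟩
    rw [Finset.mem_Ico] at hk
    exact ((mem_maxAltSegs_iff x).mp hp).2.2.1 k hk.1 hk.2

lemma card_Sset_add (x : Fin n → Fin 2) :
    (Sset n x).card + numAltSegs (List.ofFn x) = n := by
  have h1 : (Sset n x).card = ∑ p ∈ maxAltSegs (List.ofFn x), (p.2 - p.1) := by
    rw [Sset_eq_biUnion x, Finset.card_biUnion]
    · apply Finset.sum_congr rfl
      intro p hp
      rw [Nat.card_Ico]
    · intro p hp p' hp' hne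
      exact Finset.disjoint_of_subset_left (Finset.Ico_subset_Icc_self)
        (Finset.disjoint_of_subset_right (Finset.Ico_subset_Icc_self)
          (segs_disjoint_Icc x p hp p' hp' hne))
  have h2 := sum_seg_len x
  have h3 : ∑ p ∈ maxAltSegs (List.ofFn x), (p.2 + 1 - p.1) =
      ∑ p ∈ maxAltSegs (List.ofFn x), ((p.2 - p.1) + 1) := by
    apply Finset.sum_congr rfl
    intro p hp
    have := ((mem_maxAltSegs_iff x).mp (by rwa [← Prod.mk.eta (p := p)] at hp)).1
    omega
  rw [h3, Finset.sum_add_distrib] at h2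
  simp only [Finset.sum_const, smul_eq_mul, mul_one] at h2
  rw [numAltSegs, h1]
  exact h2

lemma card_lt_pairs_Icc (a b : ℕ) :
    2 * (((Finset.Icc a b) ×ˢ (Finset.Icc a b)).filter fun v : ℕ × ℕ => v.1 < v.2).card =
      (b + 1 - a) * (b - a) := by
  have hrw : ((Finset.Icc a b) ×ˢ (Finset.Icc a b)).filter (fun v : ℕ × ℕ => v.1 < v.2) =
      (Finset.Icc a b).biUnion fun q => (Finset.Ico a q).image fun r => (r, q) := by
    ext ⟨r, q⟩
    rw [Finset.mem_filter, Finset.mem_product, Finset.mem_biUnion]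
    constructor
    · rintro ⟨⟨h1, h2⟩, h3⟩
      rw [Finset.mem_Icc] at h1 h2
      exact ⟨q, Finset.mem_Icc.mpr h2, Finset.mem_image.mpr
        ⟨r, Finset.mem_Ico.mpr ⟨h1.1, h3⟩, rfl⟩⟩
    · rintro ⟨q', hq', hmem⟩
      rw [Finset.mem_image] at hmem
      obtain ⟨r', hr', he⟩ := hmem
      obtain ⟨e1, e2⟩ := Prod.mk.injEq .. ▸ he
      subst e1; subst e2
      rw [Finset.mem_Icc] at hq'
      rw [Finset.mem_Ico] at hr'
      exact ⟨⟨Finset.mem_Icc.mpr ⟨hr'.1, by omega⟩, Finset.mem_Icc.mpr hq'⟩, hr'.2⟩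
  rw [hrw, Finset.card_biUnion]
  · have h1 : ∀ q ∈ Finset.Icc a b, ((Finset.Ico a q).image fun r => (r, q)).card = q - a := by
      intro q hq
      rw [Finset.card_image_of_injective _ (fun u v huv => by simpa using huv), Nat.card_Ico]
    rw [Finset.sum_congr rfl h1]
    have h2 : ∑ q ∈ Finset.Icc a b, (q - a) = ∑ t ∈ Finset.range (b + 1 - a), t := by
      rcases Nat.lt_or_ge b a with h | h
      · rw [Finset.Icc_eq_empty (by omega), show b + 1 - a = 0 by omega]
        simp
      · apply Finset.sum_nbij' (fun q => q - a) (fun t => t + a)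
        all_goals intros; simp_all [Finset.mem_Icc, Finset.mem_range]; try omega
    rw [h2, mul_comm, Finset.sum_range_id_mul_two]
    congr 1
    omega
  · rintro q1 _ q2 _ hne
    rw [Function.onFun_apply, Finset.disjoint_left]
    rintro ⟨r, q⟩ h1 h2
    rw [Finset.mem_image] at h1 h2
    obtain ⟨r1, _, he1⟩ := h1
    obtain ⟨r2, _, he2⟩ := h2
    have e1 := (Prod.mk.injEq .. ▸ he1).2
    have e2 := (Prod.mk.injEq .. ▸ he2).2
    exact hne (by omega)

lemma PairsF_eq_biUnion (x : Fin n → Fin 2) :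
    PairsF n x = (maxAltSegs (List.ofFn x)).biUnion fun p =>
      ((Finset.Icc p.1 p.2) ×ˢ (Finset.Icc p.1 p.2)).filter fun v : ℕ × ℕ => v.1 < v.2 := by
  ext ⟨p, q⟩
  rw [mem_PairsF, Finset.mem_biUnion]
  constructor
  · rintro ⟨⟨hpn, hqn⟩, hpq, hsub⟩
    obtain ⟨i, j, hseg, h1, h2⟩ := seg_cover x hpn
    have hchar := (mem_maxAltSegs_iff x).mp hseg
    have hqj : q ≤ j := by
      by_contra hc
      have hjS : j ∈ Sset n x := hsub j (by omega) (by omega)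
      rcases hchar.2.2.2.2 with h3 | h3 <;> [omega; exact h3 hjS]
    refine ⟨(i, j), hseg, Finset.mem_filter.mpr ⟨Finset.mem_product.mpr
      ⟨Finset.mem_Icc.mpr ⟨h1, h2⟩, Finset.mem_Icc.mpr ⟨by omega, hqj⟩⟩, hpq⟩⟩
  · rintro ⟨⟨i, j⟩, hseg, hmem⟩
    rw [Finset.mem_filter, Finset.mem_product, Finset.mem_Icc, Finset.mem_Icc] at hmem
    have hchar := (mem_maxAltSegs_iff x).mp hseg
    refine ⟨⟨by omega, by omega⟩, hmem.2, fun m hm1 hm2 => ?_⟩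
    exact hchar.2.2.1 m (by omega) (by omega)

lemma two_card_PairsF (x : Fin n → Fin 2) :
    2 * (PairsF n x).card =
      ∑ p ∈ maxAltSegs (List.ofFn x), (p.2 + 1 - p.1) * (p.2 - p.1) := by
  rw [PairsF_eq_biUnion x, Finset.card_biUnion, Finset.mul_sum]
  · apply Finset.sum_congr rfl
    intro p hp
    exact card_lt_pairs_Icc p.1 p.2
  · intro p hp p' hp' hne
    rw [Function.onFun_apply, Finset.disjoint_left]
    rintro ⟨r, q⟩ h1 h2
    rw [Finset.mem_filter, Finset.mem_product, Finset.mem_Icc, Finset.mem_Icc] at h1 h2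
    obtain ⟨e1, e2⟩ := seg_cover_unique x hp hp' h1.1.1.1 (by omega) h2.1.1.1 (by omega)
    exact hne (Prod.ext e1 e2)

end Aux7

section Aux8

lemma ceil_div_eq (n a : ℕ) (ha : 1 ≤ a) (han : a ≤ n) :
    (n + a - 1) / a = if n % a = 0 then n / a else n / a + 1 := by
  have hqr := Nat.div_add_mod n a
  have hra : n % a < a := Nat.mod_lt n (by omega)
  rcases Nat.eq_zero_or_pos (n % a) with h0 | h0
  · rw [if_pos h0]
    have h1 : n + a - 1 = a * (n / a) + (a - 1) := by omega
    rw [h1, Nat.mul_add_div (by omega), Nat.div_eq_of_lt (show a - 1 < a by omega),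
      Nat.add_zero]
  · rw [if_neg (by omega)]
    have h1 : n + a - 1 = a * (n / a + 1) + (n % a - 1) := by ring_nf; omega
    rw [h1, Nat.mul_add_div (by omega), Nat.div_eq_of_lt (show n % a - 1 < a by omega),
      Nat.add_zero]

lemma bal_arith (n a m c : ℕ) (ha : 1 ≤ a) (han : a ≤ n) (hc : c = (n + a - 1) / a)
    (hm : m ≤ a) (hsum : m * c + (a - m) * (c - 1) = n) :
    m * (c * (c - 1)) + (a - m) * ((c - 1) * (c - 2)) = (n / a) * (n + n % a - a) := by
  have hqr := Nat.div_add_mod n a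
  set q := n / a with hq
  set r := n % a with hr
  have hra : r < a := Nat.mod_lt n (by omega)
  have hq1 : 1 ≤ q := (Nat.one_le_div_iff (by omega)).mpr han
  rw [ceil_div_eq n a ha han, ← hq, ← hr] at hc
  have hcq : (r = 0 ∧ c = q) ∨ (0 < r ∧ c = q + 1) := by
    rcases Nat.eq_zero_or_pos r with h0 | h0
    · left; exact ⟨h0, by rwa [if_pos h0] at hc⟩
    · right; exact ⟨h0, by rwa [if_neg (by omega)] at hc⟩
  have hc1 : 1 ≤ c := by rcases hcq with ⟨_, h⟩ | ⟨_, h⟩ <;> omega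
  by_cases hc2 : c = 1
  · -- degenerate case: all segments have length 1, n = a
    subst hc2
    simp only [Nat.sub_self, mul_one, mul_zero, Nat.zero_sub] at hsum ⊢
    have hmn : m = n := by omega
    have hqq : q = 1 ∧ r = 0 := by
      rcases hcq with ⟨h0, h⟩ | ⟨h0, h⟩ <;> omega
    obtain ⟨hq2, hr2⟩ := hqq
    rw [hq2, hr2]
    have : n + 0 - a = 0 := by omega
    rw [this]
    simp
  · have hc2' : 2 ≤ c := by omega
    have hz : (m : ℤ) * c + ((a : ℤ) - m) * ((c : ℤ) - 1) = n := by
      zify [hm, hc1] at hsum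
      exact hsum
    have hz2 : (a : ℤ) * q + r = n := by exact_mod_cast hqr
    zify [hm, hc1, hc2', show a ≤ n + r by omega]
    rcases hcq with ⟨h0, hce⟩ | ⟨h0, hce⟩
    · subst hce
      have hr0 : (r : ℤ) = 0 := by exact_mod_cast h0
      rw [hr0] at hz2 ⊢
      have hma : (m : ℤ) = a := by linear_combination hz - hz2
      linear_combination (2 * (q : ℤ) - 2) * hma + (q : ℤ) * hz2
    · subst hce
      push_cast at hz ⊢
      have hmr : (m : ℤ) = r := by linear_combination hz - hz2
      linear_combination 2 * (q : ℤ) * hmr + (q : ℤ) * hz2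

end Aux8

section Aux9

lemma int_div_unique (A Q R Q0 R0 N : ℤ) (hA : 0 < A) (h1 : A * Q + R = N)
    (h2 : 0 ≤ R) (h3 : R < A) (h4 : A * Q0 + R0 = N) (h5 : 0 ≤ R0) (h6 : R0 < A) :
    Q = Q0 ∧ R = R0 := by
  have hQ : Q = Q0 := by
    by_contra hc
    rcases lt_or_gt_of_ne hc with hlt | hgt
    · have h7 : Q + 1 ≤ Q0 := by omega
      have h8 := mul_le_mul_of_nonneg_left h7 (le_of_lt hA)
      nlinarith
    · have h7 : Q0 + 1 ≤ Q := by omega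
      have h8 := mul_le_mul_of_nonneg_left h7 (le_of_lt hA)
      nlinarith
  refine ⟨hQ, ?_⟩
  rw [hQ] at h1
  linarith

set_option maxHeartbeats 1000000 in
lemma final_int (N A B Q R Q' R' : ℤ) (hA : A = B + 1) (hB : 1 ≤ B) (hNA : A ≤ N)
    (h1 : A * Q + R = N) (h2 : 0 ≤ R) (h3 : R < A)
    (h4 : B * Q' + R' = N) (h5 : 0 ≤ R') (h6 : R' < B) :
    (Q * (N + R - A) + 2 * N < Q' * (N + R' - B)) ↔ 2 * B * A < N := by
  subst hA
  set A : ℤ := B + 1 with hA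
  have hA1 : 2 ≤ A := by omega
  have hA0 : (0 : ℤ) < A := by omega
  have hB0 : (0 : ℤ) < B := by omega
  have hN0 : (0 : ℤ) < N := by omega
  have hAB : (0 : ℤ) < A * B := by positivity
  have hid : A * B * (Q' * (N + R' - B)) - A * B * (Q * (N + R - A) + 2 * N) =
      N * N + A * (R' * (B - R')) - B * (R * (A - R)) - 2 * N * A * B := by
    linear_combination (A * (N + R' - B)) * h4 - (B * (N + R - A)) * h1
  have hmain : (Q * (N + R - A) + 2 * N < Q' * (N + R' - B)) ↔
      B * (R * (A - R)) + 2 * N * A * B < N * N + A * (R' * (B - R')) := by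
    constructor
    · intro h
      have h9 := mul_lt_mul_of_pos_left h hAB
      linarith [hid]
    · intro h
      have h9 : A * B * (Q * (N + R - A) + 2 * N) < A * B * (Q' * (N + R' - B)) := by
        linarith [hid]
      exact lt_of_mul_lt_mul_left h9 hAB.le
  rw [hmain]
  constructor
  · intro h
    by_contra hc
    push_neg at hc
    set S := 2 * A * B - N with hS
    have hc2 : N * N ≤ 2 * N * A * B := by nlinarith
    have hS0 : 0 ≤ S := by nlinarith
    have hNS : N * S = 2 * N * A * B - N * N := by linear_combination N * hS
    rcases eq_or_lt_of_le hS0 with hS1 | hS1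
    · have hN2 : A * (2 * B) + 0 = N := by linear_combination - hS1
      have hN2' : B * (2 * A) + 0 = N := by linear_combination - hS1
      obtain ⟨_, hR⟩ := int_div_unique A Q R (2 * B) 0 N hA0 h1 h2 h3 hN2 le_rfl hA0
      obtain ⟨_, hR'⟩ := int_div_unique B Q' R' (2 * A) 0 N hB0 h4 h5 h6 hN2' le_rfl hB0
      rw [hR, hR'] at h
      nlinarith [h]
    · rcases lt_or_ge S B with hSB | hSB
      · have hN2 : A * (2 * B - 1) + (A - S) = N := by linear_combination - hS
        have hN2' : B * (2 * A - 1) + (B - S) = N := by linear_combination - hS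
        obtain ⟨_, hR⟩ := int_div_unique A Q R (2 * B - 1) (A - S) N hA0 h1 h2 h3 hN2
          (by omega) (by omega)
        obtain ⟨_, hR'⟩ := int_div_unique B Q' R' (2 * A - 1) (B - S) N hB0 h4 h5 h6 hN2'
          (by omega) (by omega)
        rw [hR, hR'] at h
        have hSS : S * S < S * N := by
          apply mul_lt_mul_of_pos_left _ hS1
          nlinarith
        nlinarith [h, hSS, hNS]
      · have hE1 : 4 * (A * (R' * (B - R'))) ≤ A * (B * B) := by
          nlinarith [sq_nonneg (2 * R' - B), hA0]
        have hE2 : 0 ≤ B * (R * (A - R)) :=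
          mul_nonneg hB0.le (mul_nonneg h2 (by omega))
        rcases le_or_gt (A * B) N with hN1 | hN1
        · have hkey : A * B * B ≤ N * S := mul_le_mul hN1 hSB hB0.le hN0.le
          linarith [h, hE1, hE2, hkey, hNS, hc2]
        · have hs2 : A * B ≤ S := by linarith
          have hkey : A * (A * B) ≤ N * S := mul_le_mul hNA hs2 hAB.le hN0.le
          have hkey2 : A * (B * B) ≤ A * (A * B) := by nlinarith
          linarith [h, hE1, hE2, hkey, hkey2, hNS, hc2]
  · intro hN
    set S := N - 2 * A * B with hS
    have hS1 : 1 ≤ S := by nlinarith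
    have hNS : N * S = N * N - 2 * N * A * B := by linear_combination N * hS
    rcases le_or_gt A (8 * S) with hs | hs
    · have hE1 : 4 * (B * (R * (A - R))) ≤ B * (A * A) := by
        nlinarith [sq_nonneg (2 * R - A), hB0]
      have hE2 : 0 ≤ A * (R' * (B - R')) :=
        mul_nonneg hA0.le (mul_nonneg h5 (by omega))
      have hkey : (A * B) * A ≤ (A * B) * (8 * S) := by
        apply mul_le_mul_of_nonneg_left hs hAB.le
      have hkey2 : (2 * (A * B) + 1) * S ≤ N * S := by
        apply mul_le_mul_of_nonneg_right _ (by omega)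
        nlinarith
      linarith [hE1, hE2, hkey, hkey2, hNS, hS1]
    · have hSB : S < B := by omega
      have hN2 : A * (2 * B) + S = N := by linear_combination hS
      have hN2' : B * (2 * A) + S = N := by linear_combination hS
      obtain ⟨_, hR⟩ := int_div_unique A Q R (2 * B) S N hA0 h1 h2 h3 hN2 (by omega) (by omega)
      obtain ⟨_, hR'⟩ := int_div_unique B Q' R' (2 * A) S N hB0 h4 h5 h6 hN2' (by omega) (by omega)
      rw [hR, hR']
      have hSS : S * S < S * N := by
        apply mul_lt_mul_of_pos_left _ hS1
        nlinarith
      nlinarith [hSS, hNS]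

end Aux9

section Aux10

lemma final_arith (n a : ℕ) (hn2 : 1 < n) (ha : 2 ≤ a) (han : a ≤ n) :
    ((n / a) * (n + n % a - a) + 2 * n < (n / (a - 1)) * (n + n % (a - 1) - (a - 1))) ↔
      2 * (a - 1) * a < n := by
  zify [show a ≤ n + n % a from by omega, show (a-1:ℕ) ≤ n + n % (a - 1) from by omega,
    show (1:ℕ) ≤ a from by omega]
  exact final_int (n : ℤ) (a : ℤ) ((a : ℤ) - 1) ((n : ℤ) / (a : ℤ)) ((n : ℤ) % (a : ℤ))
    ((n : ℤ) / ((a : ℤ) - 1)) ((n : ℤ) % ((a : ℤ) - 1))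
    (by ring) (by omega) (by exact_mod_cast han)
    (Int.mul_ediv_add_emod _ _) (Int.emod_nonneg _ (by omega)) (Int.emod_lt_of_pos _ (by omega))
    (Int.mul_ediv_add_emod _ _) (Int.emod_nonneg _ (by omega)) (Int.emod_lt_of_pos _ (by omega))

lemma balanced_sum {n : ℕ} (x : Fin n → Fin 2) (a : ℕ) (ha : 1 ≤ a) (han : a ≤ n)
    (hA : numAltSegs (List.ofFn x) = a)
    (hlen : ∀ p ∈ maxAltSegs (List.ofFn x),
      p.2 + 1 - p.1 = (n + a - 1) / a ∨ p.2 + 1 - p.1 = (n + a - 1) / a - 1) :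
    ∑ p ∈ maxAltSegs (List.ofFn x), (p.2 + 1 - p.1) * (p.2 - p.1) =
      (n / a) * (n + n % a - a) := by
  set c := (n + a - 1) / a with hc
  set m := ((maxAltSegs (List.ofFn x)).filter fun p => p.2 + 1 - p.1 = c).card with hm
  have hcard : (maxAltSegs (List.ofFn x)).card = a := hA
  have hmle : m ≤ a := hcard ▸ Finset.card_filter_le _ _
  have hsplit : ∀ f : ℕ → ℕ,
      ∑ p ∈ maxAltSegs (List.ofFn x), f (p.2 + 1 - p.1) = m * f c + (a - m) * f (c - 1) := by
    intro f
    rw [← Finset.sum_filter_add_sum_filter_not (maxAltSegs (List.ofFn x))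
      (fun p => p.2 + 1 - p.1 = c)]
    have e1 : ∑ p ∈ (maxAltSegs (List.ofFn x)).filter (fun p => p.2 + 1 - p.1 = c),
        f (p.2 + 1 - p.1) = m * f c := by
      rw [Finset.sum_congr rfl (fun p hp => by rw [(Finset.mem_filter.mp hp).2]),
        Finset.sum_const, smul_eq_mul]
    have e2 : ∑ p ∈ (maxAltSegs (List.ofFn x)).filter (fun p => ¬ (p.2 + 1 - p.1 = c)),
        f (p.2 + 1 - p.1) = (a - m) * f (c - 1) := by
      have hnc : ∀ p ∈ (maxAltSegs (List.ofFn x)).filter (fun p => ¬ (p.2 + 1 - p.1 = c)),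
          p.2 + 1 - p.1 = c - 1 := by
        intro p hp
        rw [Finset.mem_filter] at hp
        rcases hlen p hp.1 with h | h
        · exact absurd h hp.2
        · exact h
      rw [Finset.sum_congr rfl (fun p hp => by rw [hnc p hp]), Finset.sum_const, smul_eq_mul]
      congr 1
      have := Finset.card_filter_add_card_filter_not
        (s := maxAltSegs (List.ofFn x)) (p := fun p => p.2 + 1 - p.1 = c)
      omega
    rw [e1, e2]
  have hsum1 : m * c + (a - m) * (c - 1) = n := by
    have := hsplit id
    simp only [id] at this
    rw [← this]
    exact sum_seg_len x
  have hsum2 : ∑ p ∈ maxAltSegs (List.ofFn x), (p.2 + 1 - p.1) * (p.2 - p.1) =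
      m * (c * (c - 1)) + (a - m) * ((c - 1) * (c - 1 - 1)) := by
    have hcg : ∀ p ∈ maxAltSegs (List.ofFn x),
        (p.2 + 1 - p.1) * (p.2 - p.1) = (p.2 + 1 - p.1) * ((p.2 + 1 - p.1) - 1) := by
      intro p hp
      have hij := ((mem_maxAltSegs_iff x).mp (by rwa [← Prod.mk.eta (p := p)] at hp)).1
      congr 1
      omega
    rw [Finset.sum_congr rfl hcg, hsplit (fun s => s * (s - 1))]
  have hfin := bal_arith n a m c ha han hc hmle hsum1
  rw [hsum2]
  have e3 : c - 1 - 1 = c - 2 := by omega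
  rw [e3]
  exact hfin

end Aux10

section Final

theorem balanced_ball_lt_iff' (n a : ℕ) (hn : 1 < n) (ha2 : 2 ≤ a) (han : a ≤ n)
    (x y : Fin n → Fin 2) (hx : IsBalanced n a x) (hy : IsBalanced n (a - 1) y) :
    (fllBall 2 n 1 y).card < (fllBall 2 n 1 x).card ↔ 2 * (a - 1) * a < n := by
  have hn0 : 0 < n := by omega
  obtain ⟨hxA, hxlen⟩ := hx
  obtain ⟨hyA, hylen⟩ := hy
  have hbx := ball_card_eq x hn0
  have hby := ball_card_eq y hn0
  have hSx : (Sset n x).card = n - a := by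
    have := card_Sset_add x
    rw [hxA] at this
    omega
  have hSy : (Sset n y).card = n - (a - 1) := by
    have := card_Sset_add y
    rw [hyA] at this
    omega
  rw [hSx] at hbx
  rw [hSy] at hby
  have h2Px : 2 * (PairsF n x).card = (n / a) * (n + n % a - a) := by
    rw [two_card_PairsF x]
    exact balanced_sum x a (by omega) han hxA hxlen
  have h2Py : 2 * (PairsF n y).card = (n / (a - 1)) * (n + n % (a - 1) - (a - 1)) := by
    rw [two_card_PairsF y]
    exact balanced_sum y (a - 1) (by omega) (by omega) hyA hylen
  rw [← final_arith n a hn ha2 han]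
  have hC : (n - (a - 1)) * n = (n - a) * n + n := by
    have h1 : n - (a - 1) = (n - a) + 1 := by omega
    rw [h1]
    ring
  rw [hC] at hby
  omega

end Final

/-- For `n > 1` and `2 ≤ a ≤ n`, an `a`-balanced sequence has a
strictly larger FLL `1`-ball than an `(a-1)`-balanced one iff `n > 2(a-1)a`. -/
theorem balanced_ball_lt_iff (n a : ℕ) (hn : 1 < n) (ha2 : 2 ≤ a) (han : a ≤ n)
    (x y : Fin n → Fin 2) (hx : IsBalanced n a x) (hy : IsBalanced n (a - 1) y) :
    (fllBall 2 n 1 y).card < (fllBall 2 n 1 x).card ↔ 2 * (a - 1) * a < n :=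
  balanced_ball_lt_iff' n a hn ha2 han x y hx hy
end
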